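/- arXiv:0810.1554 — 10 statements merged into one kernel-verified Lean document; each statement's English description precedes it below -/
import Mathlib

section
/- Let N ≥ 1, let A = diag(a_1, …, a_N) be a real diagonal N×N matrix, let y ∈ ℝ^N, let μ ∈ ℝ, and let λ ∈ ℝ with λ ≠ a_i for every i. Then λ is an eigenvalue of the real symmetric matrix A + μ·y yᵀ (i.e. det(λ·I_N − A − μ·y yᵀ) = 0) if and only if λ satisfies the secular equation 1 − μ · Σ_{i=1}^N y_i²/(λ − a_i) = 0. -/
open Matrix

theorem aux_det_one_add (inst : DecidableEq (Fin 1)) (X : Matrix (Fin 1) (Fin 1) ℝ) :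
    @Matrix.det (Fin 1) inst _ ℝ _
      ((@OfNat.ofNat (Matrix (Fin 1) (Fin 1) ℝ) 1
        (@One.toOfNat1 _ (@Matrix.one (Fin 1) ℝ inst Real.instZero Real.instOne))) + X)
      = 1 + X 0 0 := by
  obtain rfl : inst = instDecidableEqFin 1 := Subsingleton.elim _ _
  rw [Matrix.det_fin_one, Matrix.add_apply, Matrix.one_apply_eq]

theorem stmt_1 (N : ℕ) (hN : 1 ≤ N) (a y : Fin N → ℝ) (μ lam : ℝ)
    (hlam : ∀ i, lam ≠ a i) :
    (lam • (1 : Matrix (Fin N) (Fin N) ℝ) - Matrix.diagonal a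
        - μ • Matrix.vecMulVec y y).det = 0
      ↔ 1 - μ * ∑ i, y i ^ 2 / (lam - a i) = 0 := by
  have hd : ∀ i, lam - a i ≠ 0 := fun i => sub_ne_zero.mpr (hlam i)
  set u : Fin N → ℝ := fun i => -(μ * y i) with hu
  set D : Matrix (Fin N) (Fin N) ℝ := Matrix.diagonal (fun i => lam - a i) with hD
  have hM : lam • (1 : Matrix (Fin N) (Fin N) ℝ) - Matrix.diagonal a
        - μ • Matrix.vecMulVec y y
      = D + replicateCol (Fin 1) u * replicateRow (Fin 1) y := by
    rw [vecMulVec_eq (Fin 1)]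
    ext i j
    by_cases h : i = j <;>
      · simp [hD, Matrix.diagonal, h, Matrix.mul_apply, hu, sub_eq_add_neg]
        ring
  have hdet : D.det = ∏ i, (lam - a i) := by simp [hD]
  have hDdet : IsUnit D.det := by
    rw [hdet]
    exact (Finset.prod_ne_zero_iff.mpr fun i _ => hd i).isUnit
  rw [hM]
  erw [det_add_replicateCol_mul_replicateRow (ι := Fin 1) hDdet]
  have hinv : D⁻¹ = Matrix.diagonal (fun i => (lam - a i)⁻¹) := by
    apply Matrix.inv_eq_right_inv
    rw [hD, Matrix.diagonal_mul_diagonal, ← Matrix.diagonal_one]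
    rw [show (fun i => (lam - a i) * (lam - a i)⁻¹) = fun _ : Fin N => (1:ℝ) from
      funext fun i => mul_inv_cancel₀ (hd i)]
  have hsum : (replicateRow (Fin 1) y * Matrix.diagonal (fun i => (lam - a i)⁻¹) * replicateCol (Fin 1) u)
        (0 : Fin 1) (0 : Fin 1) = -(μ * ∑ i, y i ^ 2 / (lam - a i)) := by
    simp only [Matrix.mul_apply, Matrix.diagonal_apply, replicateRow_apply, replicateCol_apply, mul_ite,
      mul_zero, ite_mul, zero_mul, Finset.sum_ite_eq, Finset.sum_ite_eq', Finset.mem_univ,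
      if_true, Finset.mul_sum, ← Finset.sum_neg_distrib]
    refine Finset.sum_congr rfl fun i _ => ?_
    rw [hu, div_eq_mul_inv]; ring
  rw [hinv]
  erw [aux_det_one_add]
  rw [hsum, ← sub_eq_add_neg, mul_eq_zero]
  constructor
  · rintro (h | h)
    · exact absurd h hDdet.ne_zero
    · exact h
  · exact Or.inr
end

section
/- Let N ≥ 1, let a_1 > a_2 > ⋯ > a_N be real numbers, let μ > 0, and let y ∈ ℝ^N with y_i ≠ 0 for every i. Then the real symmetric matrix diag(a_1, …, a_N) + μ·y yᵀ has N distinct real eigenvalues λ_1 > λ_2 > ⋯ > λ_N, and they strictly interlace with the a_i in the sense that λ_1 > a_1 > λ_2 > a_2 > ⋯ > λ_N > a_N. -/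
open Matrix Finset Polynomial


noncomputable def Gfun (N : ℕ) (a y : Fin N → ℝ) (μ : ℝ) (x : ℝ) : ℝ :=
  (∏ j, (x - a j)) - μ * ∑ i, (y i)^2 * ∏ j ∈ Finset.univ.erase i, (x - a j)

noncomputable def Ppoly (N : ℕ) (a y : Fin N → ℝ) (μ : ℝ) : Polynomial ℝ :=
  (∏ i, (X - C (a i))) - C μ * ∑ i, (C ((y i)^2) * ∏ j ∈ Finset.univ.erase i, (X - C (a j)))

lemma det_eq_G_aux (N : ℕ) (a y : Fin N → ℝ) (μ : ℝ) (x : ℝ) (hx : ∀ i, x ≠ a i) :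
    (x • (1 : Matrix (Fin N) (Fin N) ℝ)
        - (Matrix.diagonal a + μ • Matrix.vecMulVec y y)).det = Gfun N a y μ x := by
  set d : Fin N → ℝ := fun i => x - a i with hd
  have hdne : ∀ i, d i ≠ 0 := fun i => sub_ne_zero.mpr (hx i)
  have key : x • (1 : Matrix (Fin N) (Fin N) ℝ)
      - (Matrix.diagonal a + μ • Matrix.vecMulVec y y)
      = Matrix.diagonal d *
        (1 + Matrix.replicateCol Unit (fun i => (-μ * y i) / d i) * Matrix.replicateRow Unit y) := by
    ext i j
    rw [Matrix.mul_apply]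
    by_cases h : i = j
    · subst h
      simp [Matrix.mul_apply, Matrix.vecMulVec, Matrix.one_apply, Matrix.diagonal_apply, hd]
      field_simp [sub_ne_zero.mpr (hx i)]
      ring
    · simp [Matrix.mul_apply, Matrix.vecMulVec, Matrix.one_apply, Matrix.diagonal_apply, h, hd]
      field_simp [sub_ne_zero.mpr (hx i)]
  rw [key, Matrix.det_mul, Matrix.det_diagonal, Matrix.det_one_add_replicateCol_mul_replicateRow]
  rw [dotProduct, Gfun, mul_add, mul_one, Finset.mul_sum, Finset.mul_sum]
  congr 1
  rw [← Finset.sum_neg_distrib]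
  refine Finset.sum_congr rfl fun i _ => ?_
  have hprod : ∏ j, d j = d i * ∏ j ∈ Finset.univ.erase i, d j :=
    (Finset.mul_prod_erase _ _ (Finset.mem_univ i)).symm
  rw [hprod]
  field_simp [hdne i]
  ring

lemma Gfun_continuous (N : ℕ) (a y : Fin N → ℝ) (μ : ℝ) :
    Continuous (Gfun N a y μ) := by
  unfold Gfun; fun_prop

lemma det_eq_G (N : ℕ) (a y : Fin N → ℝ) (μ : ℝ) (x : ℝ) :
    (x • (1 : Matrix (Fin N) (Fin N) ℝ)
        - (Matrix.diagonal a + μ • Matrix.vecMulVec y y)).det = Gfun N a y μ x := by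
  have hdense : Dense {x : ℝ | ∀ i, x ≠ a i} := by
    have : {x : ℝ | ∀ i, x ≠ a i} = (Set.range a)ᶜ := by
      ext x; simp [Set.mem_compl_iff, Set.mem_range, eq_comm]
    rw [this]
    exact (Set.finite_range a).countable.dense_compl ℝ
  have hcontD : Continuous (fun x : ℝ => (x • (1 : Matrix (Fin N) (Fin N) ℝ)
      - (Matrix.diagonal a + μ • Matrix.vecMulVec y y)).det) := by
    apply Continuous.matrix_det
    fun_prop
  have := Continuous.ext_on hdense hcontD (Gfun_continuous N a y μ)
    (fun x hx => det_eq_G_aux N a y μ x hx)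
  exact congrFun this x

lemma Ppoly_eval (N : ℕ) (a y : Fin N → ℝ) (μ : ℝ) (x : ℝ) :
    (Ppoly N a y μ).eval x = Gfun N a y μ x := by
  simp [Ppoly, Gfun, eval_prod, eval_finset_sum]

lemma Ppoly_monic (N : ℕ) (hN : 1 ≤ N) (a y : Fin N → ℝ) (μ : ℝ) :
    (Ppoly N a y μ).Monic ∧ (Ppoly N a y μ).natDegree = N := by
  have h1 : (∏ i : Fin N, (X - C (a i))).Monic :=
    monic_prod_of_monic _ _ fun i _ => monic_X_sub_C (a i)
  have hdeg1 : (∏ i : Fin N, (X - C (a i))).natDegree = N := by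
    rw [natDegree_prod _ _ fun i _ => X_sub_C_ne_zero (a i)]
    simp
  have h2 : (C μ * ∑ i, (C ((y i)^2) * ∏ j ∈ Finset.univ.erase i, (X - C (a j)))).natDegree < N := by
    refine lt_of_le_of_lt (natDegree_mul_le.trans ?_) (show N - 1 < N by omega)
    rw [natDegree_C, zero_add]
    refine natDegree_sum_le_of_forall_le _ _ fun i _ => ?_
    refine natDegree_mul_le.trans ?_
    rw [natDegree_C, zero_add]
    rw [natDegree_prod _ _ fun j _ => X_sub_C_ne_zero (a j)]
    simp [Finset.card_erase_of_mem]
  constructor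
  · refine h1.sub_of_left ?_
    exact degree_lt_degree (by rwa [hdeg1])
  · rw [Ppoly, natDegree_sub_eq_left_of_natDegree_lt (by rwa [hdeg1]), hdeg1]

lemma sign_R (N : ℕ) (a : Fin N → ℝ) (ha : StrictAnti a) (k : Fin N) :
    0 < (-1 : ℝ)^(k : ℕ) * ∏ j ∈ Finset.univ.erase k, (a k - a j) := by
  have hsplit : Finset.univ.erase k = Finset.Iio k ∪ Finset.Ioi k := by
    ext j
    simp only [Finset.mem_erase, Finset.mem_union, Finset.mem_Iio, Finset.mem_Ioi,
      Finset.mem_univ, and_true]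
    exact ne_iff_lt_or_gt
  have hdisj : Disjoint (Finset.Iio k) (Finset.Ioi k) :=
    Finset.disjoint_left.mpr fun j h1 h2 =>
      absurd (Finset.mem_Ioi.mp h2) (not_lt.mpr (Finset.mem_Iio.mp h1).le)
  rw [hsplit, Finset.prod_union hdisj]
  have h2 : 0 < ∏ j ∈ Finset.Ioi k, (a k - a j) :=
    Finset.prod_pos fun j hj => sub_pos.mpr (ha (Finset.mem_Ioi.mp hj))
  have h1 : ∏ j ∈ Finset.Iio k, (a k - a j)
      = (-1 : ℝ)^(k : ℕ) * ∏ j ∈ Finset.Iio k, (a j - a k) := by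
    rw [← Fin.card_Iio k]
    rw [← Finset.prod_const (-1 : ℝ), ← Finset.prod_mul_distrib]
    exact Finset.prod_congr rfl fun j _ => by ring
  have h1pos : 0 < ∏ j ∈ Finset.Iio k, (a j - a k) :=
    Finset.prod_pos fun j hj => sub_pos.mpr (ha (Finset.mem_Iio.mp hj))
  rw [h1]
  have h4 : ((-1 : ℝ)^(k:ℕ)) * ((-1 : ℝ)^(k:ℕ)) = 1 := by
    rw [← pow_add]; exact Even.neg_one_pow ⟨(k:ℕ), rfl⟩
  have key : (0:ℝ) < ((-1 : ℝ)^(k:ℕ) * (-1 : ℝ)^(k:ℕ))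
      * ((∏ j ∈ Finset.Iio k, (a j - a k)) * ∏ j ∈ Finset.Ioi k, (a k - a j)) := by
    rw [h4, one_mul]; exact mul_pos h1pos h2
  ring_nf at key ⊢
  simp only [neg_add_eq_sub]
  linarith [key]

lemma sign_G (N : ℕ) (a y : Fin N → ℝ) (μ : ℝ) (hμ : 0 < μ) (ha : StrictAnti a)
    (hy : ∀ i, y i ≠ 0) (k : Fin N) :
    0 < (-1 : ℝ)^((k : ℕ) + 1) * Gfun N a y μ (a k) := by
  have hG : Gfun N a y μ (a k)
      = -(μ * ((y k)^2 * ∏ j ∈ Finset.univ.erase k, (a k - a j))) := by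
    rw [Gfun]
    rw [Finset.prod_eq_zero (Finset.mem_univ k) (sub_self (a k))]
    rw [Finset.sum_eq_single k]
    · ring
    · intro i _ hik
      rw [Finset.prod_eq_zero (Finset.mem_erase.mpr ⟨Ne.symm hik, Finset.mem_univ k⟩)
        (sub_self (a k))]
      ring
    · intro h; exact absurd (Finset.mem_univ k) h
  rw [hG]
  have hR := sign_R N a ha k
  have hyk := hy k
  have hy2 : 0 < (y k)^2 := by positivity
  calc (0:ℝ) < (μ * (y k)^2) * ((-1 : ℝ)^(k:ℕ) * ∏ j ∈ Finset.univ.erase k, (a k - a j)) :=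
        mul_pos (mul_pos hμ hy2) hR
    _ = (-1 : ℝ)^((k:ℕ)+1) * -(μ * ((y k)^2 * ∏ j ∈ Finset.univ.erase k, (a k - a j))) := by
        rw [pow_succ]; ring

lemma exists_root_between {f : ℝ → ℝ} (hf : Continuous f) {u v : ℝ} (huv : u < v)
    (h : f u * f v < 0) : ∃ x ∈ Set.Ioo u v, f x = 0 := by
  rcases lt_or_ge (f u) 0 with hu | hu
  · have hv : 0 < f v := by nlinarith
    have := intermediate_value_Ioo huv.le hf.continuousOn (α := ℝ)
    obtain ⟨x, hx, hfx⟩ := this ⟨hu, hv⟩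
    exact ⟨x, hx, hfx⟩
  · have hu' : 0 < f u := by
      rcases hu.lt_or_eq with h' | h'
      · exact h'
      · exfalso; rw [← h'] at h; simp at h
    have hv : f v < 0 := by nlinarith
    obtain ⟨x, hx, hfx⟩ := intermediate_value_Ioo' huv.le hf.continuousOn ⟨hv, hu'⟩
    exact ⟨x, hx, hfx⟩

theorem stmt_2 (N : ℕ) (hN : 1 ≤ N) (a y : Fin N → ℝ) (μ : ℝ) (hμ : 0 < μ)
    (ha : StrictAnti a) (hy : ∀ i, y i ≠ 0) :
    ∃ lam : Fin N → ℝ,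
      StrictAnti lam ∧
      (∀ x : ℝ,
        (x • (1 : Matrix (Fin N) (Fin N) ℝ)
            - (Matrix.diagonal a + μ • Matrix.vecMulVec y y)).det = 0
          ↔ ∃ i, x = lam i) ∧
      (∀ i, a i < lam i) ∧
      (∀ i : Fin N, ∀ h : (i : ℕ) + 1 < N, lam ⟨(i : ℕ) + 1, h⟩ < a i) := by
  obtain ⟨n, rfl⟩ : ∃ n, N = n + 1 := ⟨N - 1, by omega⟩
  have hGcont := Gfun_continuous (n+1) a y μ
  have hsign := fun k => sign_G (n+1) a y μ hμ ha hy k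
  obtain ⟨hmonic, hdeg⟩ := Ppoly_monic (n+1) (by omega) a y μ
  -- tendsto atTop
  have htend : Filter.Tendsto (Gfun (n+1) a y μ) Filter.atTop Filter.atTop := by
    have h1 : Filter.Tendsto (fun x => (Ppoly (n+1) a y μ).eval x)
        Filter.atTop Filter.atTop := by
      apply Polynomial.tendsto_atTop_of_leadingCoeff_nonneg
      · rw [degree_eq_natDegree hmonic.ne_zero, hdeg]
        exact_mod_cast Nat.succ_pos n
      · rw [Monic.leadingCoeff hmonic]; norm_num
    exact h1.congr (fun x => Ppoly_eval _ a y μ x)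
  -- top root
  have hGa0 : Gfun (n+1) a y μ (a 0) < 0 := by
    have h := hsign 0
    rw [show (((0 : Fin (n+1)) : ℕ) + 1) = 1 by simp, pow_one] at h
    linarith
  obtain ⟨b, hb1, hb2⟩ : ∃ b, a 0 < b ∧ 0 < Gfun (n+1) a y μ b := by
    obtain ⟨b, h1, h2⟩ := ((htend.eventually_gt_atTop 0).and
      (Filter.eventually_gt_atTop (a 0))).exists
    exact ⟨b, h2, h1⟩
  obtain ⟨l0, hl0mem, hl0G⟩ :=
    exists_root_between hGcont hb1 (mul_neg_of_neg_of_pos hGa0 hb2)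
  -- gap roots
  have hgap : ∀ k : ℕ, ∀ h : k + 1 < n + 1,
      ∃ l ∈ Set.Ioo (a ⟨k+1, h⟩) (a ⟨k, by omega⟩), Gfun (n+1) a y μ l = 0 := by
    intro k h
    have hk' : k < n + 1 := by omega
    have halt : a ⟨k+1, h⟩ < a ⟨k, hk'⟩ := ha (by simp [Fin.lt_def])
    have h1 := hsign ⟨k, hk'⟩
    have h2 := hsign ⟨k+1, h⟩
    simp only [Fin.val_mk] at h1 h2
    have hodd : ((-1:ℝ)^(k+1)) * ((-1:ℝ)^(k+1+1)) = -1 := by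
      rw [← pow_add]; exact Odd.neg_one_pow ⟨k+1, by ring⟩
    have h3 := mul_pos h1 h2
    have h4 : ((-1:ℝ)^(k+1) * Gfun (n+1) a y μ (a ⟨k, hk'⟩))
        * ((-1:ℝ)^(k+1+1) * Gfun (n+1) a y μ (a ⟨k+1, h⟩))
        = -(Gfun (n+1) a y μ (a ⟨k+1, h⟩) * Gfun (n+1) a y μ (a ⟨k, hk'⟩)) := by
      calc ((-1:ℝ)^(k+1) * Gfun (n+1) a y μ (a ⟨k, hk'⟩))
          * ((-1:ℝ)^(k+1+1) * Gfun (n+1) a y μ (a ⟨k+1, h⟩))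
          = (((-1:ℝ)^(k+1)) * ((-1:ℝ)^(k+1+1)))
            * (Gfun (n+1) a y μ (a ⟨k, hk'⟩) * Gfun (n+1) a y μ (a ⟨k+1, h⟩)) := by ring
        _ = -(Gfun (n+1) a y μ (a ⟨k+1, h⟩) * Gfun (n+1) a y μ (a ⟨k, hk'⟩)) := by
            rw [hodd]; ring
    rw [h4] at h3
    exact exists_root_between hGcont halt (by linarith)
  choose L hLmem hLG using hgap
  -- define lam
  set lam : Fin (n+1) → ℝ := fun i =>
    if h0 : (i : ℕ) = 0 then l0
    else L ((i : ℕ) - 1) (by have := i.isLt; omega) with hlam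
  have key1 : ∀ i : Fin (n+1), a i < lam i ∧ Gfun (n+1) a y μ (lam i) = 0 := by
    intro i
    by_cases h0 : (i : ℕ) = 0
    · have hi : i = 0 := Fin.ext (by simpa using h0)
      rw [hlam]
      simp only [h0, dif_pos]
      subst hi
      exact ⟨hl0mem.1, hl0G⟩
    · have hpf : ((i : ℕ) - 1) + 1 < n + 1 := by have := i.isLt; omega
      have hi : i = ⟨((i : ℕ) - 1) + 1, hpf⟩ := Fin.ext (by simp; omega)
      rw [hlam]
      simp only [h0, dif_neg, not_false_iff]
      constructor
      · conv_lhs => rw [hi]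
        exact (hLmem _ _).1
      · exact hLG _ _
  have key2 : ∀ i : Fin (n+1), ∀ h : (i : ℕ) + 1 < n + 1,
      lam ⟨(i : ℕ) + 1, h⟩ < a i := by
    intro i h
    have h0 : ¬(((⟨(i : ℕ) + 1, h⟩ : Fin (n+1)) : ℕ) = 0) := by simp
    rw [hlam]
    simp only [h0, dif_neg, not_false_iff]
    exact (hLmem (i : ℕ) h).2
  have hanti : StrictAnti lam := by
    rw [Fin.strictAnti_iff_succ_lt]
    intro i
    have h1 : ((i.castSucc : Fin (n+1)) : ℕ) + 1 < n + 1 := by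
      have := i.isLt; simp only [Fin.coe_castSucc]; omega
    have hsucc : i.succ = ⟨((i.castSucc : Fin (n+1)) : ℕ) + 1, h1⟩ := Fin.ext (by simp)
    rw [hsucc]
    exact lt_trans (key2 i.castSucc h1) (key1 i.castSucc).1
  refine ⟨lam, hanti, ?_, fun i => (key1 i).1, key2⟩
  intro x
  rw [det_eq_G (n+1) a y μ x]
  constructor
  · intro hx0
    by_contra hno
    push_neg at hno
    have hinj : Function.Injective lam := hanti.injective
    have hxnotmem : x ∉ Finset.image lam Finset.univ := by
      simp only [Finset.mem_image, Finset.mem_univ, true_and, not_exists]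
      exact fun i hi => hno i hi.symm
    have hcard : (insert x (Finset.image lam Finset.univ)).card = n + 2 := by
      rw [Finset.card_insert_of_notMem hxnotmem,
        Finset.card_image_of_injective _ hinj, Finset.card_univ, Fintype.card_fin]
    have hsub : insert x (Finset.image lam Finset.univ)
        ⊆ (Ppoly (n+1) a y μ).roots.toFinset := by
      intro z hz
      rw [Multiset.mem_toFinset, Polynomial.mem_roots hmonic.ne_zero]
      rcases Finset.mem_insert.mp hz with rfl | hz'
      · rw [Polynomial.IsRoot, Ppoly_eval]; exact hx0
      · obtain ⟨i, -, rfl⟩ := Finset.mem_image.mp hz'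
        rw [Polynomial.IsRoot, Ppoly_eval]; exact (key1 i).2
    have hle : n + 2 ≤ n + 1 := by
      calc n + 2 = (insert x (Finset.image lam Finset.univ)).card := hcard.symm
        _ ≤ (Ppoly (n+1) a y μ).roots.toFinset.card := Finset.card_le_card hsub
        _ ≤ Multiset.card (Ppoly (n+1) a y μ).roots := Multiset.toFinset_card_le _
        _ ≤ (Ppoly (n+1) a y μ).natDegree := Polynomial.card_roots' _
        _ = n + 1 := hdeg
    omega
  · rintro ⟨i, rfl⟩
    exact (key1 i).2
end

section
/- Let J > 0 and c > 0 be real numbers, and consider the averaged secular equation of the shifted mean Gaussian ensemble, 1 = (c/J) · ∫_{−J}^{J} (J/π)·(1 − x²/J²)^{1/2} / (λ − x) dx, as an equation for λ in the range λ > J. If c > 1, then this equation has a unique solution with λ > J, namely λ = (J/2)·(c + 1/c). If 0 < c ≤ 1, then the equation has no solution with λ > J. -/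
open Real Set

lemma key (a : ℝ) (ha : 1 < a) :
    ∫ x in (-1:ℝ)..1, Real.sqrt (1 - x^2) / (a - x)
      = π * (a - Real.sqrt (a^2 - 1)) := by
  set s := Real.sqrt (a^2 - 1) with hs
  have ha0 : (0:ℝ) < a := lt_trans one_pos ha
  have hs2 : s^2 = a^2 - 1 := Real.sq_sqrt (by nlinarith)
  have hspos : 0 < s := Real.sqrt_pos.mpr (by nlinarith)
  set F : ℝ → ℝ := fun x => -Real.sqrt (1 - x^2) + a * Real.arcsin x
      - s * Real.arcsin ((a*x - 1)/(a - x)) with hF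
  have hax : ∀ x : ℝ, x ∈ Icc (-1:ℝ) 1 → a - x > 0 := by
    intro x hx; have := hx.2; linarith
  have hcont : ContinuousOn F (Icc (-1:ℝ) 1) := by
    apply ContinuousOn.sub
    apply ContinuousOn.add
    · exact (continuousOn_const.sub (continuous_pow 2).continuousOn).sqrt.neg
    · exact continuousOn_const.mul (Real.continuous_arcsin.continuousOn)
    · apply continuousOn_const.mul
      apply Real.continuous_arcsin.comp_continuousOn
      exact ContinuousOn.div (by fun_prop) (by fun_prop)
        (fun x hx => ne_of_gt (hax x hx))
  have hderiv : ∀ x ∈ Ioo (-1:ℝ) 1,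
      HasDerivAt F (Real.sqrt (1 - x^2) / (a - x)) x := by
    intro x hx
    have hx1 : x < 1 := hx.2
    have hxm1 : -1 < x := hx.1
    have haxx : 0 < a - x := by linarith
    have h1x2 : 0 < 1 - x^2 := by nlinarith
    have hsq : 0 < Real.sqrt (1 - x^2) := Real.sqrt_pos.mpr h1x2
    have hsq2 : (Real.sqrt (1 - x^2))^2 = 1 - x^2 := Real.sq_sqrt h1x2.le
    -- derivative of sqrt part
    have d1 : HasDerivAt (fun x : ℝ => Real.sqrt (1 - x^2))
        (-(2*x) / (2 * Real.sqrt (1 - x^2))) x := by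
      have hbase : HasDerivAt (fun x : ℝ => 1 - x^2) (-(2*x)) x := by
        simpa using ((hasDerivAt_pow 2 x).const_sub 1)
      exact hbase.sqrt (ne_of_gt h1x2)
    -- derivative of arcsin x
    have d2 : HasDerivAt Real.arcsin (1 / Real.sqrt (1 - x^2)) x :=
      Real.hasDerivAt_arcsin (ne_of_gt hxm1) (ne_of_lt hx1)
    -- g
    set g : ℝ → ℝ := fun x => (a*x - 1)/(a - x) with hg
    have hgx : g x = (a*x-1)/(a-x) := rfl
    have h1g2 : 1 - (g x)^2 = (a^2-1) * (1 - x^2) / (a-x)^2 := by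
      rw [hgx]; field_simp; ring
    have h1g2pos : 0 < 1 - (g x)^2 := by
      rw [h1g2]
      apply div_pos (mul_pos (by nlinarith) h1x2) (by positivity)
    have hgne1 : g x ≠ 1 := by
      intro h; have := h1g2pos; rw [h] at this; norm_num at this
    have hgnem1 : g x ≠ -1 := by
      intro h; have := h1g2pos; rw [h] at this; norm_num at this
    have dg : HasDerivAt g ((a^2 - 1)/(a-x)^2) x := by
      have hnum : HasDerivAt (fun x : ℝ => a*x - 1) a x := by
        simpa using ((hasDerivAt_id x).const_mul a).sub_const 1
      have hden : HasDerivAt (fun x : ℝ => a - x) (-1) x := by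
        simpa using (hasDerivAt_id x).const_sub a
      have := hnum.div hden (ne_of_gt haxx)
      refine this.congr_deriv ?_
      ring
    have darc : HasDerivAt Real.arcsin (1 / Real.sqrt (1 - (g x)^2)) (g x) :=
      Real.hasDerivAt_arcsin hgnem1 hgne1
    have d3 : HasDerivAt (fun x => Real.arcsin (g x))
        (1 / Real.sqrt (1 - (g x)^2) * ((a^2-1)/(a-x)^2)) x := darc.comp x dg
    -- simplify sqrt(1 - g²)
    have hsg : Real.sqrt (1 - (g x)^2) = s * Real.sqrt (1 - x^2) / (a - x) := by
      rw [h1g2]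
      rw [show (a^2-1) * (1 - x^2) / (a-x)^2 = (s * Real.sqrt (1-x^2) / (a-x))^2 by
        rw [div_pow, mul_pow, hs2, hsq2]]
      exact Real.sqrt_sq (by positivity)
    have dF : HasDerivAt F
        (-(-(2*x) / (2 * Real.sqrt (1 - x^2))) + a * (1 / Real.sqrt (1 - x^2))
          - s * (1 / Real.sqrt (1 - (g x)^2) * ((a^2-1)/(a-x)^2))) x := by
      exact ((d1.neg.add (d2.const_mul a)).sub (d3.const_mul s))
    convert dF using 1
    rw [hsg, ← hs2]
    field_simp
    linear_combination hsq2 + hs2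
  have hint : IntervalIntegrable (fun x => Real.sqrt (1 - x^2) / (a - x))
      MeasureTheory.volume (-1 : ℝ) 1 := by
    apply ContinuousOn.intervalIntegrable
    rw [uIcc_of_le (by norm_num)]
    exact ContinuousOn.div (by fun_prop) (by fun_prop)
      (fun x hx => ne_of_gt (hax x hx))
  have := intervalIntegral.integral_eq_sub_of_hasDeriv_right_of_le (by norm_num)
    hcont (fun x hx => (hderiv x hx).hasDerivWithinAt) hint
  rw [this]
  have e1 : F 1 = a * (π/2) - s * (π/2) := by
    simp only [hF]
    rw [show ((a:ℝ)*1 - 1)/(a - 1) = 1 by rw [mul_one]; exact div_self (by linarith)]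
    simp [Real.arcsin_one]
  have e2 : F (-1) = -(a * (π/2)) + s * (π/2) := by
    simp only [hF]
    rw [show ((a:ℝ)*(-1) - 1)/(a - (-1)) = -1 by rw [div_eq_iff (by linarith)]; ring]
    simp [Real.arcsin_neg, Real.arcsin_one]
  rw [e1, e2]; ring

lemma keyJ (J lam : ℝ) (hJ : 0 < J) (hl : J < lam) :
    (∫ x in (-J)..J, (J / π) * Real.sqrt (1 - x ^ 2 / J ^ 2) / (lam - x))
      = lam - Real.sqrt (lam^2 - J^2) := by
  have hJ0 : J ≠ 0 := ne_of_gt hJ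
  set a := lam / J with haa
  have ha : 1 < a := (one_lt_div hJ).mpr hl
  set f : ℝ → ℝ := fun x => (J / π) * Real.sqrt (1 - x ^ 2 / J ^ 2) / (lam - x) with hf
  have hcomp := intervalIntegral.smul_integral_comp_mul_right (a := (-1:ℝ)) (b := 1) f J
  have h1 : (∫ x in (-J)..J, f x) = J • ∫ t in (-1:ℝ)..1, f (t * J) := by
    rw [hcomp]; norm_num
  rw [h1]
  have gen : ∀ s d : ℝ, (J/π) * s / (J*d) = (1/π) * (s/d) := by
    intro s d
    rcases eq_or_ne d 0 with h | h
    · simp [h]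
    · field_simp
  have h2 : ∀ t : ℝ, f (t * J) = (1/π) * (Real.sqrt (1 - t^2) / (a - t)) := by
    intro t
    have ht : (t*J)^2 / J^2 = t^2 := by field_simp
    show (J/π) * Real.sqrt (1 - (t*J)^2/J^2) / (lam - t*J)
        = (1/π) * (Real.sqrt (1 - t^2) / (a - t))
    rw [ht, show lam - t*J = J * (a - t) by rw [haa]; field_simp]
    exact gen _ _
  rw [intervalIntegral.integral_congr (g := fun t => (1/π) * (Real.sqrt (1 - t^2) / (a - t))) (fun t _ => h2 t)]
  rw [intervalIntegral.integral_const_mul, key a ha]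
  have hs : J * Real.sqrt (a^2 - 1) = Real.sqrt (lam^2 - J^2) := by
    rw [show lam^2 - J^2 = J^2 * (a^2 - 1) by rw [haa]; field_simp]
    rw [Real.sqrt_mul (by positivity), Real.sqrt_sq hJ.le]
  have hpi : (0:ℝ) < π := Real.pi_pos
  rw [smul_eq_mul]
  rw [show (1/π) * (π * (a - Real.sqrt (a^2-1))) = a - Real.sqrt (a^2-1) by
    field_simp]
  rw [mul_sub, hs, haa]
  field_simp

theorem stmt_5 (J c : ℝ) (hJ : 0 < J) (hc : 0 < c) :
    (1 < c →
      (J < J / 2 * (c + 1 / c) ∧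
        1 = c / J * ∫ x in (-J)..J,
            (J / π) * Real.sqrt (1 - x ^ 2 / J ^ 2) / (J / 2 * (c + 1 / c) - x) ∧
        ∀ lam : ℝ, J < lam →
          1 = c / J * (∫ x in (-J)..J,
              (J / π) * Real.sqrt (1 - x ^ 2 / J ^ 2) / (lam - x)) →
          lam = J / 2 * (c + 1 / c))) ∧
    (c ≤ 1 → ∀ lam : ℝ, J < lam →
      1 ≠ c / J * ∫ x in (-J)..J,
          (J / π) * Real.sqrt (1 - x ^ 2 / J ^ 2) / (lam - x)) := by
  have hc0 : c ≠ 0 := ne_of_gt hc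
  have hJ0 : J ≠ 0 := ne_of_gt hJ
  -- main algebraic consequence of the equation
  have main : ∀ lam : ℝ, J < lam →
      1 = c / J * (lam - Real.sqrt (lam^2 - J^2)) →
      1 < c ∧ lam = J / 2 * (c + 1 / c) := by
    intro lam hl h
    have hsq : Real.sqrt (lam^2 - J^2) ^ 2 = lam^2 - J^2 :=
      Real.sq_sqrt (by nlinarith)
    have hspos : 0 < Real.sqrt (lam^2 - J^2) := Real.sqrt_pos.mpr (by nlinarith)
    have h' : J = c * (lam - Real.sqrt (lam^2 - J^2)) := by
      field_simp at h; linarith [h]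
    have heqc : c * Real.sqrt (lam^2 - J^2) = c * lam - J := by
      linear_combination h'
    have hposc : 0 < c * lam - J := by
      rw [← heqc]; exact mul_pos hc hspos
    have hsqc : (c * lam - J)^2 = (lam^2 - J^2) * c^2 := by
      rw [← heqc, mul_pow, hsq]; ring
    have hlam : lam = J / 2 * (c + 1 / c) := by
      have h2 : (2*c*J) * lam = (2*c*J) * (J/2*(c+1/c)) := by
        have hrhs : (2*c*J) * (J/2*(c+1/c)) = J^2*(c^2+1) := by
          field_simp
        rw [hrhs]; linear_combination (-1:ℝ)*hsqc
      exact mul_left_cancel₀ (by positivity) h2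
    have h1c : 1 < c := by
      have hv : c * lam - J = J*(c^2-1)/2 := by rw [hlam]; field_simp; ring
      rw [hv] at hposc
      by_contra hle
      push_neg at hle
      have hc2 : c^2 ≤ 1 := by nlinarith
      have hnn : 0 ≤ J * (1 - c^2) := mul_nonneg hJ.le (by linarith)
      nlinarith [hposc, hnn]
    exact ⟨h1c, hlam⟩
  constructor
  · intro h1c
    have hl0 : J < J / 2 * (c + 1 / c) := by
      have h2c : 2 < c + 1/c := by
        rw [show c + 1/c = (c^2+1)/c by field_simp]
        rw [lt_div_iff₀ hc]; nlinarith
      nlinarith [h2c, hJ]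
    refine ⟨hl0, ?_, ?_⟩
    · rw [keyJ J _ hJ hl0]
      set lam := J / 2 * (c + 1 / c) with hlam
      have hval : Real.sqrt (lam^2 - J^2) = J/2 * (c - 1/c) := by
        rw [show lam^2 - J^2 = (J/2*(c-1/c))^2 by rw [hlam]; field_simp; ring]
        exact Real.sqrt_sq (by
          have : 0 < c - 1/c := by
            rw [sub_pos, div_lt_iff₀ hc]; nlinarith
          positivity)
      rw [hval, hlam]
      field_simp
      ring
    · intro lam hl heq
      rw [keyJ J lam hJ hl] at heq
      exact (main lam hl heq).2
  · intro hc1 lam hl heq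
    rw [keyJ J lam hJ hl] at heq
    have := (main lam hl heq).1
    linarith
end

section
/- Let b > 0 be a real number, and consider the averaged secular equation of the rank-one spiked Wishart ensemble, 1 = b · ∫_{0}^{4} (1/(π√y))·(1 − y/4)^{1/2} / (z − y) dy, as an equation for z in the range z > 4. If b > 2, then this equation has a unique solution with z > 4, namely z = b²/(b − 1). If 0 < b ≤ 2, then the equation has no solution with z > 4. -/
open Real

lemma sqrt_four : Real.sqrt 4 = 2 := by
  rw [show (4:ℝ) = 2^2 by norm_num, Real.sqrt_sq (by norm_num)]

lemma sqrt_expr (y : ℝ) (hy4 : y ≤ 4) : Real.sqrt (1 - y/4) = Real.sqrt (4 - y) / 2 := by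
  rw [show (1:ℝ) - y/4 = (4-y)/4 by ring, Real.sqrt_div (by linarith), sqrt_four]

lemma deriv1 (z : ℝ) (hz : 4 < z) {y : ℝ} (hy0 : 0 < y) (hy4 : y < 4) :
    HasDerivAt (fun u => (arctan (Real.sqrt u / Real.sqrt (4-u))
        - Real.sqrt ((z-4)/z) * arctan (Real.sqrt ((z-4)/z) * (Real.sqrt u / Real.sqrt (4-u)))) / π)
      ((1 / (π * Real.sqrt y)) * Real.sqrt (1 - y/4) / (z - y)) y := by
  have hz0 : (0:ℝ) < z := by linarith
  set c := Real.sqrt ((z-4)/z) with hc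
  set s := Real.sqrt y with hsdef
  set t := Real.sqrt (4-y) with htdef
  have hs0 : 0 < s := Real.sqrt_pos.2 hy0
  have ht0 : 0 < t := Real.sqrt_pos.2 (by linarith)
  have hc0 : 0 < c := Real.sqrt_pos.2 (div_pos (by linarith) hz0)
  have hs2 : s^2 = y := Real.sq_sqrt hy0.le
  have ht2 : t^2 = 4 - y := Real.sq_sqrt (by linarith)
  have hc2 : c^2 * z = z - 4 := by
    rw [hc, Real.sq_sqrt (div_pos (by linarith) hz0).le]; field_simp
  have hzy : 0 < z - y := by linarith
  have hs : HasDerivAt (fun u => Real.sqrt u) (1/(2*s)) y := hasDerivAt_sqrt hy0.ne'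
  have ht : HasDerivAt (fun u : ℝ => Real.sqrt (4-u)) (-(1/(2*t))) y := by
    have h1 : HasDerivAt (fun u : ℝ => 4-u) (-1) y := (hasDerivAt_id y).const_sub 4
    have := (hasDerivAt_sqrt (by linarith : (4:ℝ)-y ≠ 0)).comp (h := fun u : ℝ => 4-u) y h1
    exact this.congr_deriv (by ring)
  have hg : HasDerivAt (fun u => Real.sqrt u / Real.sqrt (4-u))
      ((1/(2*s) * t - s * (-(1/(2*t)))) / t^2) y := hs.div ht ht0.ne'
  set g' := (1/(2*s) * t - s * (-(1/(2*t)))) / t^2 with hg'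
  have ha1 : HasDerivAt (fun u => arctan (Real.sqrt u / Real.sqrt (4-u)))
      (1/(1+(s/t)^2) * g') y := (Real.hasDerivAt_arctan (s/t)).comp (h := fun u => Real.sqrt u / Real.sqrt (4-u)) y hg
  have ha2 : HasDerivAt (fun u => arctan (c * (Real.sqrt u / Real.sqrt (4-u))))
      (1/(1+(c*(s/t))^2) * (c * g')) y := (Real.hasDerivAt_arctan (c*(s/t))).comp (h := fun u => c * (Real.sqrt u / Real.sqrt (4-u))) y (hg.const_mul c)
  have := (ha1.sub (ha2.const_mul c)).div_const π
  refine this.congr_deriv ?_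
  rw [sqrt_expr y hy4.le, hg']
  have hπ : (0:ℝ) < π := Real.pi_pos
  have h1 : 1 + (s/t)^2 = 4 / t^2 := by
    field_simp
    linear_combination ht2 + hs2
  have h2 : 1 + (c*(s/t))^2 = (4*(z - y)) / (z * t^2) := by
    field_simp
    linear_combination s^2*hc2 + z*ht2 + (z-4)*hs2
  rw [h1, h2]
  field_simp
  linear_combination (-(t^2+s^2))*hc2 - s^2*ht2 + t^2*hs2

lemma deriv2 (z : ℝ) (hz : 4 < z) {y : ℝ} (hy0 : 0 < y) (hy4 : y < 4) :
    HasDerivAt (fun u => (Real.sqrt ((z-4)/z) * arctan (Real.sqrt (4-u) / Real.sqrt u / Real.sqrt ((z-4)/z))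
        - arctan (Real.sqrt (4-u) / Real.sqrt u)) / π + (1 - Real.sqrt ((z-4)/z))/2)
      ((1 / (π * Real.sqrt y)) * Real.sqrt (1 - y/4) / (z - y)) y := by
  have hz0 : (0:ℝ) < z := by linarith
  set c := Real.sqrt ((z-4)/z) with hc
  set s := Real.sqrt y with hsdef
  set t := Real.sqrt (4-y) with htdef
  have hs0 : 0 < s := Real.sqrt_pos.2 hy0
  have ht0 : 0 < t := Real.sqrt_pos.2 (by linarith)
  have hc0 : 0 < c := Real.sqrt_pos.2 (div_pos (by linarith) hz0)
  have hs2 : s^2 = y := Real.sq_sqrt hy0.le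
  have ht2 : t^2 = 4 - y := Real.sq_sqrt (by linarith)
  have hc2 : c^2 * z = z - 4 := by
    rw [hc, Real.sq_sqrt (div_pos (by linarith) hz0).le]; field_simp
  have hzy : 0 < z - y := by linarith
  have hs : HasDerivAt (fun u => Real.sqrt u) (1/(2*s)) y := hasDerivAt_sqrt hy0.ne'
  have ht : HasDerivAt (fun u : ℝ => Real.sqrt (4-u)) (-(1/(2*t))) y := by
    have h1 : HasDerivAt (fun u : ℝ => 4-u) (-1) y := (hasDerivAt_id y).const_sub 4
    have := (hasDerivAt_sqrt (by linarith : (4:ℝ)-y ≠ 0)).comp (h := fun u : ℝ => 4-u) y h1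
    exact this.congr_deriv (by ring)
  have hg : HasDerivAt (fun u => Real.sqrt (4-u) / Real.sqrt u)
      ((-(1/(2*t)) * s - t * (1/(2*s))) / s^2) y := ht.div hs hs0.ne'
  set g' := (-(1/(2*t)) * s - t * (1/(2*s))) / s^2 with hg'
  have ha1 : HasDerivAt (fun u => arctan (Real.sqrt (4-u) / Real.sqrt u))
      (1/(1+(t/s)^2) * g') y := (Real.hasDerivAt_arctan (t/s)).comp (h := fun u => Real.sqrt (4-u) / Real.sqrt u) y hg
  have ha2 : HasDerivAt (fun u => arctan (Real.sqrt (4-u) / Real.sqrt u / c))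
      (1/(1+(t/s/c)^2) * (g'/c)) y := (Real.hasDerivAt_arctan (t/s/c)).comp (h := fun u => Real.sqrt (4-u) / Real.sqrt u / c) y (hg.div_const c)
  have := (((ha2.const_mul c).sub ha1).div_const π).add_const ((1 - c)/2)
  refine this.congr_deriv ?_
  rw [sqrt_expr y hy4.le, hg']
  have hπ : (0:ℝ) < π := Real.pi_pos
  have h1 : 1 + (t/s)^2 = 4 / s^2 := by
    field_simp
    linear_combination ht2 + hs2
  have h2 : 1 + (t/s/c)^2 = (4*(z - y)) / ((z-4) * s^2) := by
    have hz4 : (z:ℝ) - 4 ≠ 0 := by linarith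
    field_simp
    linear_combination (c^2*((4-z)*(s^2+y) - 4 + 5*z - 4*y) + t^2*(4-z) + s^2*c^2*(z-4))*hs2 + (-(y-1)*(y-4) + s^2*(y-4))*hc2 + ((y-1)*(4-z) + s^2*(z-4))*ht2
  rw [h1, h2]
  field_simp
  linear_combination (-(y-4))*hs2 - y*ht2

lemma key_integral (z : ℝ) (hz : 4 < z) :
    ∫ y in (0:ℝ)..4, (1 / (π * Real.sqrt y)) * Real.sqrt (1 - y / 4) / (z - y)
      = (1 - Real.sqrt ((z-4)/z)) / 2 := by
  have hz0 : (0:ℝ) < z := by linarith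
  set c := Real.sqrt ((z-4)/z) with hc
  have hc0 : 0 < c := Real.sqrt_pos.2 (div_pos (by linarith) hz0)
  have hπ : (0:ℝ) < π := Real.pi_pos
  set f : ℝ → ℝ := fun y => (1 / (π * Real.sqrt y)) * Real.sqrt (1 - y / 4) / (z - y) with hf
  set F1 : ℝ → ℝ := fun u => (arctan (Real.sqrt u / Real.sqrt (4-u))
      - c * arctan (c * (Real.sqrt u / Real.sqrt (4-u)))) / π with hF1
  set F2 : ℝ → ℝ := fun u => (c * arctan (Real.sqrt (4-u) / Real.sqrt u / c)
      - arctan (Real.sqrt (4-u) / Real.sqrt u)) / π + (1 - c)/2 with hF2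
  -- integrability on [0,2]
  have hmeas : MeasureTheory.AEStronglyMeasurable f (MeasureTheory.volume.restrict (Set.uIoc (0:ℝ) 2)) := by
    apply Measurable.aestronglyMeasurable
    apply Measurable.div
    · exact (measurable_const.div (measurable_const.mul Real.continuous_sqrt.measurable)).mul
        (Real.continuous_sqrt.measurable.comp (by fun_prop))
    · fun_prop
  have int1 : IntervalIntegrable f MeasureTheory.volume 0 2 := by
    have hrpow : IntervalIntegrable (fun y : ℝ => (1/(π*(z-2))) * y ^ (-(1/2) : ℝ))
        MeasureTheory.volume 0 2 :=
      (intervalIntegral.intervalIntegrable_rpow' (by norm_num)).const_mul _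
    apply hrpow.mono_fun hmeas
    filter_upwards [MeasureTheory.ae_restrict_mem measurableSet_uIoc] with y hy
    rw [Set.uIoc_of_le (by norm_num : (0:ℝ) ≤ 2)] at hy
    obtain ⟨hy0, hy2⟩ := hy
    have hs0 : 0 < Real.sqrt y := Real.sqrt_pos.2 hy0
    have hzy : 0 < z - y := by linarith
    have hz2 : (0:ℝ) < z - 2 := by linarith
    have hd : 0 < π * Real.sqrt y * (z - y) := mul_pos (mul_pos hπ hs0) hzy
    have hd2 : 0 < π * Real.sqrt y * (z - 2) := mul_pos (mul_pos hπ hs0) hz2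
    have hfy : f y = Real.sqrt (1 - y/4) / (π * Real.sqrt y * (z - y)) := by
      rw [hf]
      field_simp
      try (left; ring)
    have hrw : y ^ (-(1/2) : ℝ) = (Real.sqrt y)⁻¹ := by
      rw [Real.rpow_neg hy0.le, Real.sqrt_eq_rpow]
    rw [Real.norm_eq_abs, Real.norm_eq_abs, hfy, hrw,
      abs_of_nonneg (div_nonneg (Real.sqrt_nonneg _) hd.le),
      abs_of_nonneg (mul_nonneg (div_nonneg zero_le_one (mul_pos hπ hz2).le) (inv_nonneg.2 hs0.le))]
    have h1 : Real.sqrt (1 - y/4) ≤ 1 := Real.sqrt_le_one.mpr (by linarith)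
    calc Real.sqrt (1 - y/4) / (π * Real.sqrt y * (z - y))
        ≤ 1 / (π * Real.sqrt y * (z - 2)) :=
          div_le_div₀ (by norm_num) h1 hd2
            (mul_le_mul_of_nonneg_left (by linarith) (mul_pos hπ hs0).le)
      _ = 1/(π*(z-2)) * (Real.sqrt y)⁻¹ := by field_simp
  -- integrability on [2,4]
  have int2 : IntervalIntegrable f MeasureTheory.volume 2 4 := by
    apply ContinuousOn.intervalIntegrable
    rw [Set.uIcc_of_le (by norm_num : (2:ℝ) ≤ 4)]
    apply ContinuousOn.div
    · apply ContinuousOn.mul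
      · apply ContinuousOn.div continuousOn_const
          (continuousOn_const.mul Real.continuous_sqrt.continuousOn)
        intro x hx
        have : 0 < Real.sqrt x := Real.sqrt_pos.2 (by linarith [hx.1])
        exact (mul_pos hπ this).ne'
      · exact Real.continuous_sqrt.comp_continuousOn (by fun_prop)
    · exact (continuousOn_const.sub continuousOn_id)
    · intro x hx
      have : x ≤ 4 := hx.2
      intro h; linarith [sub_eq_zero.1 h]
  -- FTC on [0,2]
  have contF1 : ContinuousOn F1 (Set.Icc 0 2) := by
    rw [hF1]
    apply ContinuousOn.div _ continuousOn_const (fun x _ => hπ.ne')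
    have hg : ContinuousOn (fun u : ℝ => Real.sqrt u / Real.sqrt (4-u)) (Set.Icc 0 2) := by
      apply ContinuousOn.div Real.continuous_sqrt.continuousOn
        (Real.continuous_sqrt.comp_continuousOn (by fun_prop))
      intro x hx
      have : 0 < Real.sqrt (4-x) := Real.sqrt_pos.2 (by linarith [hx.2])
      exact this.ne'
    exact (Real.continuous_arctan.comp_continuousOn hg).sub
      (continuousOn_const.mul (Real.continuous_arctan.comp_continuousOn (continuousOn_const.mul hg)))
  have I1 : ∫ y in (0:ℝ)..2, f y = F1 2 - F1 0 :=
    intervalIntegral.integral_eq_sub_of_hasDeriv_right_of_le (by norm_num) contF1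
      (fun x hx => (deriv1 z hz hx.1 (by linarith [hx.2])).hasDerivWithinAt) int1
  -- FTC on [2,4]
  have contF2 : ContinuousOn F2 (Set.Icc 2 4) := by
    rw [hF2]
    apply ContinuousOn.add _ continuousOn_const
    apply ContinuousOn.div _ continuousOn_const (fun x _ => hπ.ne')
    have hg : ContinuousOn (fun u : ℝ => Real.sqrt (4-u) / Real.sqrt u) (Set.Icc 2 4) := by
      apply ContinuousOn.div
        (Real.continuous_sqrt.comp_continuousOn (by fun_prop))
        Real.continuous_sqrt.continuousOn
      intro x hx
      have : 0 < Real.sqrt x := Real.sqrt_pos.2 (by linarith [hx.1])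
      exact this.ne'
    exact (continuousOn_const.mul (Real.continuous_arctan.comp_continuousOn (hg.div_const c))).sub
      (Real.continuous_arctan.comp_continuousOn hg)
  have I2 : ∫ y in (2:ℝ)..4, f y = F2 4 - F2 2 :=
    intervalIntegral.integral_eq_sub_of_hasDeriv_right_of_le (by norm_num) contF2
      (fun x hx => (deriv2 z hz (by linarith [hx.1]) hx.2).hasDerivWithinAt) int2
  have hsplit : ∫ y in (0:ℝ)..4, f y = (∫ y in (0:ℝ)..2, f y) + ∫ y in (2:ℝ)..4, f y :=
    (intervalIntegral.integral_add_adjacent_intervals int1 int2).symm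
  rw [hsplit, I1, I2]
  simp only [hF1, hF2]
  have h42 : (4:ℝ) - 2 = 2 := by norm_num
  have h44 : (4:ℝ) - 4 = 0 := by norm_num
  have hs2 : Real.sqrt 2 ≠ 0 := (Real.sqrt_pos.2 (by norm_num)).ne'
  rw [h42, h44, Real.sqrt_zero, div_self hs2, Real.arctan_one]
  simp only [zero_div, Real.sqrt_zero, mul_zero, Real.arctan_zero, sub_zero, zero_sub, zero_div, mul_zero]
  have hinv : arctan (1/c) = π/2 - arctan c := by
    rw [one_div]; exact Real.arctan_inv_of_pos hc0
  rw [hinv]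
  field_simp
  ring

theorem stmt_7 (b : ℝ) (hb : 0 < b) :
    (2 < b →
      (4 < b ^ 2 / (b - 1) ∧
        1 = b * ∫ y in (0:ℝ)..4,
            (1 / (π * Real.sqrt y)) * Real.sqrt (1 - y / 4) / (b ^ 2 / (b - 1) - y) ∧
        ∀ z : ℝ, 4 < z →
          1 = b * (∫ y in (0:ℝ)..4,
              (1 / (π * Real.sqrt y)) * Real.sqrt (1 - y / 4) / (z - y)) →
          z = b ^ 2 / (b - 1))) ∧
    (b ≤ 2 → ∀ z : ℝ, 4 < z →
      1 ≠ b * ∫ y in (0:ℝ)..4,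
          (1 / (π * Real.sqrt y)) * Real.sqrt (1 - y / 4) / (z - y)) := by
  constructor
  · intro hb2
    have hb1 : (0:ℝ) < b - 1 := by linarith
    have hz4 : 4 < b ^ 2 / (b - 1) := by
      rw [lt_div_iff₀ hb1]; nlinarith [sq_nonneg (b-2)]
    refine ⟨hz4, ?_, ?_⟩
    · rw [key_integral _ hz4]
      have hcval : (b ^ 2 / (b - 1) - 4) / (b ^ 2 / (b - 1)) = ((b-2)/b)^2 := by
        field_simp
        ring
      rw [hcval, Real.sqrt_sq (div_nonneg (by linarith) hb.le)]
      field_simp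
      ring
    · intro z hz heq
      rw [key_integral z hz] at heq
      have hzz : (0:ℝ) < z := by linarith
      have hcnn : (0:ℝ) ≤ (z-4)/z := (div_pos (by linarith) hzz).le
      have h2 : b * Real.sqrt ((z-4)/z) = b - 2 := by linear_combination 2*heq
      have hcb : Real.sqrt ((z-4)/z) = (b-2)/b := by
        rw [eq_div_iff hb.ne', mul_comm]; exact h2
      have hsq : (z-4)/z = ((b-2)/b)^2 := by
        rw [← hcb, Real.sq_sqrt hcnn]
      rw [div_pow, div_eq_div_iff hzz.ne' (by positivity : (b:ℝ)^2 ≠ 0)] at hsq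
      rw [eq_div_iff hb1.ne']
      linear_combination (1/4) * hsq
  · intro hb2 z hz heq
    rw [key_integral z hz] at heq
    have hzz : (0:ℝ) < z := by linarith
    have hc0 : 0 < Real.sqrt ((z-4)/z) := Real.sqrt_pos.2 (div_pos (by linarith) hzz)
    have hc1 : Real.sqrt ((z-4)/z) < 1 := by
      rw [show (1:ℝ) = Real.sqrt 1 by simp]
      exact Real.sqrt_lt_sqrt (div_pos (by linarith) hzz).le
        (by rw [div_lt_one hzz]; linarith)
    nlinarith [heq, hc0, hc1]
end

section
/- Let γ ≥ 1 be a real number, set c = (1 − √γ)² and d = (1 + √γ)², and let k ≥ 1 be an integer. Then ∫_{c}^{d} x^k · ((x − c)(d − x))^{1/2} / (2πx) dx = Σ_{i=1}^{k} (1/k)·binomial(k, i)·binomial(k, i−1)·γ^i. (The coefficient (1/k)·binomial(k, i)·binomial(k, i−1) of γ^i is the Narayana number N(k, i−1).) -/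
set_option maxHeartbeats 4000000
set_option linter.unusedTactic false

open Real intervalIntegral MeasureTheory

lemma relR (n m : ℕ) : ((m:ℝ)+1) * (n.choose (m+1)) = ((n:ℝ) - m) * n.choose m := by
  rcases le_or_gt m n with h | h
  · have := Nat.choose_succ_right_eq n m
    have hc : ((n.choose (m+1) * (m+1) : ℕ) : ℝ) = ((n.choose m * (n - m) : ℕ) : ℝ) := by
      exact_mod_cast congrArg (Nat.cast (R := ℝ)) this
    push_cast [Nat.cast_sub h] at hc
    linarith
  · rw [Nat.choose_eq_zero_of_lt h, Nat.choose_eq_zero_of_lt (by omega)]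
    simp

noncomputable def nara (k : ℕ) : ℕ → ℝ
  | 0 => 0
  | (i+1) => (k.choose (i+1) : ℝ) * (k.choose i) / k

lemma nara_zero_of_gt {k i : ℕ} (h : k < i) : nara k i = 0 := by
  match i with
  | 0 => rfl
  | (i+1) => simp [nara, Nat.choose_eq_zero_of_lt h]

lemma nara_ptwise {k : ℕ} (hk : 2 ≤ k) (i : ℕ) :
    ((k:ℝ)+2) * nara (k+1) i
      = (2*(k:ℝ)+1) * (nara k i + nara k (i-1))
        - ((k:ℝ)-1) * (nara (k-1) i - 2 * nara (k-1) (i-1) + nara (k-1) (i-2)) := by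
  obtain ⟨n, rfl⟩ : ∃ n, k = n + 1 := ⟨k-1, by omega⟩
  have hn : 1 ≤ n := by omega
  have hn0 : ((n:ℝ)) ≠ 0 := by exact_mod_cast Nat.one_le_iff_ne_zero.mp hn
  have hk0 : ((n:ℝ)+1) ≠ 0 := by positivity
  have hk10 : ((n:ℝ)+2) ≠ 0 := by positivity
  have hsub : n + 1 - 1 = n := by omega
  rw [hsub]
  match i with
  | 0 => simp [nara]
  | 1 =>
    simp only [show (1:ℕ) - 1 = 0 from rfl, show (1:ℕ) - 2 = 0 from rfl]
    simp [nara, Nat.choose_one_right]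
    push_cast
    field_simp
    ring
  | 2 =>
    have c2 : ∀ m : ℕ, (m.choose 2 : ℝ) = (m:ℝ) * ((m:ℝ)-1) / 2 := by
      intro m
      have h1 := relR m 0
      have h2 := relR m 1
      simp [Nat.choose_one_right] at h1 h2 ⊢
      push_cast at h2
      linarith
    simp only [show (2:ℕ) - 1 = 1 from rfl, show (2:ℕ) - 2 = 0 from rfl]
    simp [nara, Nat.choose_one_right, c2]
    push_cast
    field_simp
    ring
  | (j+3) =>
    have d1 : j + 3 - 1 = j + 2 := by omega
    have d2 : j + 3 - 2 = j + 1 := by omega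
    rw [d1, d2]
    simp only [nara]
    set x0 : ℝ := (n.choose j : ℝ) with hx0
    set x1 : ℝ := (n.choose (j+1) : ℝ) with hx1
    set x2 : ℝ := (n.choose (j+2) : ℝ) with hx2
    set x3 : ℝ := (n.choose (j+3) : ℝ) with hx3
    have p1 : ((n+1).choose (j+1) : ℝ) = x0 + x1 := by
      simp [Nat.choose_succ_succ' (n) (j)]
      rfl
    have p2 : ((n+1).choose (j+2) : ℝ) = x1 + x2 := by
      simp [Nat.choose_succ_succ' (n) (j+1)]
      rfl
    have p3 : ((n+1).choose (j+3) : ℝ) = x2 + x3 := by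
      simp [Nat.choose_succ_succ' (n) (j+2)]
      rfl
    have q2 : ((n+1+1).choose (j+2) : ℝ) = x0 + 2*x1 + x2 := by
      simp [Nat.choose_succ_succ' (n+1) (j+1), Nat.choose_succ_succ' (n) (j),
        Nat.choose_succ_succ' (n) (j+1)]
      push_cast; ring
    have q3 : ((n+1+1).choose (j+3) : ℝ) = x1 + 2*x2 + x3 := by
      simp [Nat.choose_succ_succ' (n+1) (j+2), Nat.choose_succ_succ' (n) (j+1),
        Nat.choose_succ_succ' (n) (j+2)]
      push_cast; ring
    have hj1 : ((j:ℝ)+1) ≠ 0 := by positivity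
    have hj2 : ((j:ℝ)+2) ≠ 0 := by positivity
    have hj3 : ((j:ℝ)+3) ≠ 0 := by positivity
    have r1 : ((j:ℝ)+1) * x1 = ((n:ℝ) - j) * x0 := relR n j
    have r2 : ((j:ℝ)+2) * x2 = ((n:ℝ) - (j+1)) * x1 := by
      have := relR n (j+1); push_cast at this ⊢; linarith
    have r3 : ((j:ℝ)+3) * x3 = ((n:ℝ) - (j+2)) * x2 := by
      have := relR n (j+2); push_cast at this ⊢; linarith
    have ex1 : x1 = ((n:ℝ) - j) * x0 / ((j:ℝ)+1) := by field_simp; linarith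
    have ex2 : x2 = ((n:ℝ) - (j+1)) * x1 / ((j:ℝ)+2) := by field_simp; linarith
    have ex3 : x3 = ((n:ℝ) - (j+2)) * x2 / ((j:ℝ)+3) := by field_simp; linarith
    rw [q3, q2, p3, p2, p1, ex3, ex2, ex1]
    push_cast
    field_simp
    ring

lemma nara_zero (k : ℕ) : nara k 0 = 0 := rfl

noncomputable def narT (k : ℕ) (γ : ℝ) : ℝ := ∑ i ∈ Finset.Icc 1 k, nara k i * γ^i

lemma sum_ext (γ : ℝ) {m M : ℕ} (h : m ≤ M) :
    narT m γ = ∑ i ∈ Finset.Icc 1 M, nara m i * γ^i := by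
  refine Finset.sum_subset (Finset.Icc_subset_Icc_right h) ?_
  intro i hi hni
  simp only [Finset.mem_Icc] at hi hni
  rw [nara_zero_of_gt (by omega)]
  ring

lemma sum_shift1 (γ : ℝ) (M : ℕ) (h : ℕ → ℝ) (h0 : h 0 = 0) :
    γ * ∑ i ∈ Finset.Icc 1 M, h i * γ^i
      = ∑ i ∈ Finset.Icc 1 (M+1), h (i-1) * γ^i := by
  have step1 : ∑ i ∈ Finset.Icc 2 (M+1), h (i-1) * γ^i
      = ∑ i ∈ Finset.Icc 1 (M+1), h (i-1) * γ^i := by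
    refine Finset.sum_subset (Finset.Icc_subset_Icc_left (by omega)) ?_
    intro i hi hni
    simp only [Finset.mem_Icc] at hi hni
    have : i = 1 := by omega
    subst this
    simp [h0]
  rw [← step1,
    show Finset.Icc 2 (M+1) = (Finset.Icc 1 M).map (addRightEmbedding 1) from by
      rw [Finset.map_add_right_Icc],
    Finset.sum_map, Finset.mul_sum]
  apply Finset.sum_congr rfl
  intro i _
  simp only [addRightEmbedding_apply]
  rw [Nat.add_sub_cancel, pow_succ]
  ring

lemma T_rec (γ : ℝ) {k : ℕ} (hk : 2 ≤ k) :
    ((k:ℝ)+2) * narT (k+1) γ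
      = (2*(k:ℝ)+1) * (1+γ) * narT k γ - ((k:ℝ)-1) * (1-γ)^2 * narT (k-1) γ := by
  have h1k : (1:ℕ) ≤ k := by omega
  have hA : narT k γ = ∑ i ∈ Finset.Icc 1 (k+1), nara k i * γ^i := sum_ext γ (by omega)
  have hB : γ * narT k γ = ∑ i ∈ Finset.Icc 1 (k+1), nara k (i-1) * γ^i :=
    sum_shift1 γ k (nara k) (nara_zero k)
  have hC : narT (k-1) γ = ∑ i ∈ Finset.Icc 1 (k+1), nara (k-1) i * γ^i :=
    sum_ext γ (by omega)
  have base : γ * narT (k-1) γ = ∑ i ∈ Finset.Icc 1 k, nara (k-1) (i-1) * γ^i := by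
    have h2 := sum_shift1 γ (k-1) (nara (k-1)) (nara_zero (k-1))
    rw [show k - 1 + 1 = k from by omega] at h2
    exact h2
  have hD : γ * narT (k-1) γ = ∑ i ∈ Finset.Icc 1 (k+1), nara (k-1) (i-1) * γ^i := by
    rw [base]
    refine Finset.sum_subset (Finset.Icc_subset_Icc_right (by omega)) ?_
    intro i hi hni
    simp only [Finset.mem_Icc] at hi hni
    rw [nara_zero_of_gt (show k - 1 < i - 1 by omega)]
    ring
  have hE : γ^2 * narT (k-1) γ = ∑ i ∈ Finset.Icc 1 (k+1), nara (k-1) (i-2) * γ^i := by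
    have s2 := sum_shift1 γ k (fun i => nara (k-1) (i-1)) (by simp [nara_zero])
    rw [← base] at s2
    calc γ^2 * narT (k-1) γ = γ * (γ * narT (k-1) γ) := by ring
      _ = ∑ i ∈ Finset.Icc 1 (k+1), nara (k-1) (i-1-1) * γ^i := s2
      _ = ∑ i ∈ Finset.Icc 1 (k+1), nara (k-1) (i-2) * γ^i := by
          apply Finset.sum_congr rfl; intro i _; simp [Nat.sub_sub]
  symm
  calc (2*(k:ℝ)+1) * (1+γ) * narT k γ - ((k:ℝ)-1) * (1-γ)^2 * narT (k-1) γ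
      = (2*(k:ℝ)+1) * (narT k γ + γ * narT k γ)
        - ((k:ℝ)-1) * (narT (k-1) γ - 2 * (γ * narT (k-1) γ) + γ^2 * narT (k-1) γ) := by
        ring
    _ = (2*(k:ℝ)+1) * ((∑ i ∈ Finset.Icc 1 (k+1), nara k i * γ^i)
            + ∑ i ∈ Finset.Icc 1 (k+1), nara k (i-1) * γ^i)
        - ((k:ℝ)-1) * ((∑ i ∈ Finset.Icc 1 (k+1), nara (k-1) i * γ^i)
            - 2 * (∑ i ∈ Finset.Icc 1 (k+1), nara (k-1) (i-1) * γ^i)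
            + ∑ i ∈ Finset.Icc 1 (k+1), nara (k-1) (i-2) * γ^i) := by
        rw [hB, hD, hE, ← hA, ← hC]
    _ = ∑ i ∈ Finset.Icc 1 (k+1),
          ((2*(k:ℝ)+1) * (nara k i + nara k (i-1))
            - ((k:ℝ)-1) * (nara (k-1) i - 2 * nara (k-1) (i-1) + nara (k-1) (i-2))) * γ^i := by
        simp only [Finset.mul_sum, ← Finset.sum_add_distrib, ← Finset.sum_sub_distrib]
        apply Finset.sum_congr rfl
        intro i _
        ring
    _ = ∑ i ∈ Finset.Icc 1 (k+1), (((k:ℝ)+2) * nara (k+1) i) * γ^i := by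
        apply Finset.sum_congr rfl
        intro i _
        rw [nara_ptwise hk]
    _ = ((k:ℝ)+2) * narT (k+1) γ := by
        rw [narT, Finset.mul_sum]
        apply Finset.sum_congr rfl
        intro i _
        ring

lemma cont_s (c d : ℝ) : Continuous (fun x : ℝ => Real.sqrt ((x-c)*(d-x))) :=
  Real.continuous_sqrt.comp (by continuity)

lemma integ_pow_s (c d : ℝ) (m : ℕ) :
    IntervalIntegrable (fun x : ℝ => x^m * Real.sqrt ((x-c)*(d-x))) volume c d :=
  ((continuous_pow m).mul (cont_s c d)).intervalIntegrable c d

lemma Jrec (c d : ℝ) (hcd : c < d) (n : ℕ) :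
    ((n:ℝ)+4) * ∫ x in c..d, x^(n+2) * Real.sqrt ((x-c)*(d-x))
      = ((n:ℝ)+5/2) * (c+d) * (∫ x in c..d, x^(n+1) * Real.sqrt ((x-c)*(d-x)))
        - ((n:ℝ)+1) * (c*d) * ∫ x in c..d, x^n * Real.sqrt ((x-c)*(d-x)) := by
  set s : ℝ → ℝ := fun x => Real.sqrt ((x-c)*(d-x)) with hs
  set F : ℝ → ℝ := fun x => x^(n+1) * (s x)^3 with hF
  set F' : ℝ → ℝ := fun x =>
    ((n:ℝ)+1) * x^n * ((x-c)*(d-x)) * s x + x^(n+1) * ((3/2) * (c+d-2*x)) * s x with hF'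
  have hder : ∀ x ∈ Set.Ioo c d, HasDerivAt F (F' x) x := by
    intro x hx
    have hgpos : 0 < (x-c)*(d-x) := mul_pos (by linarith [hx.1]) (by linarith [hx.2])
    have hg : HasDerivAt (fun x : ℝ => (x-c)*(d-x)) (c+d-2*x) x := by
      have h1 : HasDerivAt (fun x : ℝ => (x-c)*(d-x)) (1*(d-x) + (x-c)*(-1)) x :=
        (((hasDerivAt_id x).sub_const c)).mul ((hasDerivAt_id x).const_sub d)
      convert h1 using 1
      ring
    have hsq : HasDerivAt s (1/(2*Real.sqrt ((x-c)*(d-x))) * (c+d-2*x)) x :=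
      (Real.hasDerivAt_sqrt (ne_of_gt hgpos)).comp x hg
    have hF3 : HasDerivAt F
        (((n:ℝ)+1) * x^n * (s x)^3
          + x^(n+1) * (3 * (s x)^2 * (1/(2*Real.sqrt ((x-c)*(d-x))) * (c+d-2*x)))) x := by
      have hpow : HasDerivAt (fun x : ℝ => x^(n+1)) (((n:ℝ)+1) * x^n) x := by
        have := hasDerivAt_pow (n+1) x
        convert this using 1
        rfl
        push_cast
        simp
      exact hpow.mul (hsq.pow 3) |>.congr_deriv (by simp only [Pi.pow_apply]; ring)
    have hsxpos : 0 < s x := Real.sqrt_pos.mpr hgpos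
    have hsx2 : (s x)^2 = (x-c)*(d-x) := Real.sq_sqrt hgpos.le
    convert hF3 using 1
    have hrfl : Real.sqrt ((x-c)*(d-x)) = s x := rfl
    simp only [hF']
    rw [hrfl, ← hsx2]
    field_simp [ne_of_gt hsxpos]
  have hcont : ContinuousOn F (Set.Icc c d) := by
    apply Continuous.continuousOn
    exact (continuous_pow (n+1)).mul ((cont_s c d).pow 3)
  have hcF' : Continuous F' := by
    apply Continuous.add
    · exact (Continuous.mul (by continuity) (cont_s c d))
    · exact (Continuous.mul (by continuity) (cont_s c d))
  have hint : IntervalIntegrable F' volume c d := hcF'.intervalIntegrable c d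
  have h0 : ∫ x in c..d, F' x = F d - F c :=
    integral_eq_sub_of_hasDerivAt_of_le hcd.le hcont hder hint
  have hFc : F c = 0 := by simp [hF, hs]
  have hFd : F d = 0 := by simp [hF, hs]
  have hsplit : ∫ x in c..d, F' x
      = (-(((n:ℝ)+4))) * (∫ x in c..d, x^(n+2) * s x)
        + (((n:ℝ)+5/2) * (c+d)) * (∫ x in c..d, x^(n+1) * s x)
        + (-(((n:ℝ)+1) * (c*d))) * (∫ x in c..d, x^n * s x) := by
    rw [← intervalIntegral.integral_const_mul, ← intervalIntegral.integral_const_mul,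
      ← intervalIntegral.integral_const_mul,
      ← intervalIntegral.integral_add (((integ_pow_s c d (n+2)).const_mul _))
        ((integ_pow_s c d (n+1)).const_mul _),
      ← intervalIntegral.integral_add
        ((((integ_pow_s c d (n+2)).const_mul _)).add ((integ_pow_s c d (n+1)).const_mul _))
        ((integ_pow_s c d n).const_mul _)]
    apply intervalIntegral.integral_congr
    intro x _
    simp only [hF']
    ring
  rw [h0, hFc, hFd] at hsplit
  simp only [hs] at hsplit
  linarith [hsplit]

lemma odd_int : ∫ t in (-1:ℝ)..1, t * Real.sqrt (1-t^2) = 0 := by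
  have h := intervalIntegral.integral_comp_neg (a := (-1:ℝ)) (b := 1)
    (f := fun t => t * Real.sqrt (1-t^2))
  norm_num at h
  linarith

lemma Jsub (c d : ℝ) (hcd : c < d) (n : ℕ) :
    ∫ x in c..d, x^n * Real.sqrt ((x-c)*(d-x))
      = ((d-c)/2) • ∫ t in (-1:ℝ)..1,
          (((d-c)/2)*t + (c+d)/2)^n * (((d-c)/2) * Real.sqrt (1-t^2)) := by
  set r : ℝ := (d-c)/2 with hr
  set m : ℝ := (c+d)/2 with hm
  have hrpos : 0 < r := by rw [hr]; linarith
  have h := intervalIntegral.integral_comp_mul_add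
    (a := (-1:ℝ)) (b := 1) (c := r)
    (f := fun x => x^n * Real.sqrt ((x-c)*(d-x))) (ne_of_gt hrpos) m
  have e1 : r * (-1) + m = c := by rw [hr, hm]; ring
  have e2 : r * 1 + m = d := by rw [hr, hm]; ring
  rw [e1, e2] at h
  have hB : (∫ x in c..d, x^n * Real.sqrt ((x-c)*(d-x)))
      = r • ∫ x in (-1:ℝ)..1, (r*x+m)^n * Real.sqrt ((r*x+m-c)*(d-(r*x+m))) := by
    rw [h, smul_smul, mul_inv_cancel₀ (ne_of_gt hrpos), one_smul]
  rw [hB]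
  congr 1
  apply intervalIntegral.integral_congr
  intro t _
  have e3 : (r*t+m-c)*(d-(r*t+m)) = r^2 * (1-t^2) := by rw [hr, hm]; ring
  simp only [e3, Real.sqrt_mul (sq_nonneg r), Real.sqrt_sq hrpos.le]

lemma sqrt_one_sub_sq_integrable :
    IntervalIntegrable (fun t : ℝ => Real.sqrt (1-t^2)) volume (-1) 1 :=
  (Real.continuous_sqrt.comp (by continuity)).intervalIntegrable _ _

lemma J0 (c d : ℝ) (hcd : c < d) :
    ∫ x in c..d, x^0 * Real.sqrt ((x-c)*(d-x)) = π * ((d-c)/2)^2 / 2 := by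
  rw [Jsub c d hcd 0]
  have : (∫ t in (-1:ℝ)..1, (((d-c)/2)*t + (c+d)/2)^0 * (((d-c)/2) * Real.sqrt (1-t^2)))
      = ((d-c)/2) * ∫ t in (-1:ℝ)..1, Real.sqrt (1-t^2) := by
    rw [← intervalIntegral.integral_const_mul]
    apply intervalIntegral.integral_congr
    intro t _
    ring
  rw [this, integral_sqrt_one_sub_sq, smul_eq_mul]
  ring

lemma J1 (c d : ℝ) (hcd : c < d) :
    ∫ x in c..d, x^1 * Real.sqrt ((x-c)*(d-x))
      = ((c+d)/2) * (π * ((d-c)/2)^2 / 2) := by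
  rw [Jsub c d hcd 1]
  have i1 : IntervalIntegrable (fun t:ℝ => ((d-c)/2)^2 * (t * Real.sqrt (1-t^2)))
      volume (-1) 1 := by
    apply Continuous.intervalIntegrable
    exact continuous_const.mul (continuous_id.mul (Real.continuous_sqrt.comp (by continuity)))
  have i2 : IntervalIntegrable (fun t:ℝ => ((c+d)/2*((d-c)/2)) * Real.sqrt (1-t^2))
      volume (-1) 1 := sqrt_one_sub_sq_integrable.const_mul _
  have step : (∫ t in (-1:ℝ)..1, (((d-c)/2)*t + (c+d)/2)^1 * (((d-c)/2) * Real.sqrt (1-t^2)))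
      = (((d-c)/2)^2) * (∫ t in (-1:ℝ)..1, t * Real.sqrt (1-t^2))
        + ((c+d)/2 * ((d-c)/2)) * ∫ t in (-1:ℝ)..1, Real.sqrt (1-t^2) := by
    rw [show (∫ t in (-1:ℝ)..1, (((d-c)/2)*t + (c+d)/2)^1 * (((d-c)/2) * Real.sqrt (1-t^2)))
        = ∫ t in (-1:ℝ)..1, (((d-c)/2)^2 * (t * Real.sqrt (1-t^2))
            + ((c+d)/2*((d-c)/2)) * Real.sqrt (1-t^2)) from
      intervalIntegral.integral_congr (fun t _ => by ring),
      intervalIntegral.integral_add i1 i2, intervalIntegral.integral_const_mul,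
      intervalIntegral.integral_const_mul]
  rw [step, odd_int, integral_sqrt_one_sub_sq, smul_eq_mul]
  ring

theorem stmt_8 (γ : ℝ) (hγ : 1 ≤ γ) (k : ℕ) (hk : 1 ≤ k)
    (c d : ℝ) (hc : c = (1 - Real.sqrt γ) ^ 2) (hd : d = (1 + Real.sqrt γ) ^ 2) :
    ∫ x in c..d, x ^ k * Real.sqrt ((x - c) * (d - x)) / (2 * π * x)
      = ∑ i ∈ Finset.Icc 1 k,
          (1 / (k : ℝ)) * (Nat.choose k i : ℝ) * (Nat.choose k (i - 1) : ℝ) * γ ^ i := by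
  have hγ0 : (0:ℝ) ≤ γ := by linarith
  set a : ℝ := Real.sqrt γ with haa
  have ha2 : a^2 = γ := Real.sq_sqrt hγ0
  have ha1 : 1 ≤ a := by
    rw [haa, show (1:ℝ) = Real.sqrt 1 from (Real.sqrt_one).symm]
    exact Real.sqrt_le_sqrt hγ
  have hcd : c < d := by rw [hc, hd]; nlinarith
  have hsum : c + d = 2*(1+γ) := by rw [hc, hd]; linear_combination 2 * ha2
  have hprod : c * d = (1-γ)^2 := by
    rw [hc, hd]; linear_combination (a^2 + γ - 2) * ha2
  have hr2 : ((d-c)/2)^2 = 4*γ := by rw [hc, hd]; linear_combination 4 * ha2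
  have main : ∀ n : ℕ,
      (∫ x in c..d, x^n * Real.sqrt ((x-c)*(d-x))) = 2*π * narT (n+1) γ := by
    intro n
    induction n using Nat.strong_induction_on with
    | _ n ih =>
      match n, ih with
      | 0, _ =>
        rw [J0 c d hcd, hr2]
        have hT1 : narT 1 γ = γ := by
          simp [narT, nara]
        rw [hT1]
        ring
      | 1, _ =>
        rw [J1 c d hcd, hr2, show (c+d)/2 = 1+γ from by linarith [hsum]]
        have hT2 : narT 2 γ = γ + γ^2 := by
          have hicc : Finset.Icc 1 2 = {1, 2} := by decide
          rw [narT, hicc, Finset.sum_pair (by norm_num : (1:ℕ) ≠ 2)]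
          simp only [nara]
          norm_num [Nat.choose]
        rw [hT2]
        ring
      | (m+2), ih =>
        have hJ := Jrec c d hcd m
        have ih1 := ih (m+1) (by omega)
        have ih0 := ih m (by omega)
        rw [ih1, ih0, hsum, hprod] at hJ
        rw [show m+1+1 = m+2 from rfl] at hJ
        have hT := T_rec γ (show 2 ≤ m+2 by omega)
        rw [show m+2-1 = m+1 from rfl] at hT
        push_cast at hT
        have h4 : ((m:ℝ)+4) ≠ 0 := by positivity
        apply mul_left_cancel₀ h4
        calc ((m:ℝ)+4) * ∫ x in c..d, x^(m+2) * Real.sqrt ((x-c)*(d-x))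
            = ((m:ℝ)+5/2) * (2*(1+γ)) * (2*π*narT (m+2) γ)
              - ((m:ℝ)+1) * ((1-γ)^2) * (2*π*narT (m+1) γ) := hJ
          _ = ((m:ℝ)+4) * (2*π*narT (m+2+1) γ) := by
              linear_combination (-(2*π)) * hT
  -- relate the target integrand to x^(k-1) * sqrt
  obtain ⟨k', rfl⟩ : ∃ k', k = k'+1 := ⟨k-1, by omega⟩
  have hne : ∀ᵐ (x:ℝ) ∂(volume : Measure ℝ), x ≠ (0:ℝ) := by
    have hset : {x : ℝ | ¬ x ≠ 0} = {0} := by ext x; simp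
    rw [MeasureTheory.ae_iff, hset]
    exact measure_singleton 0
  have hL : (∫ x in c..d, x ^ (k'+1) * Real.sqrt ((x - c) * (d - x)) / (2 * π * x))
      = ∫ x in c..d, (1/(2*π)) * (x ^ k' * Real.sqrt ((x - c) * (d - x))) := by
    apply intervalIntegral.integral_congr_ae
    filter_upwards [hne] with x hx _
    rw [pow_succ]
    field_simp
  rw [hL, intervalIntegral.integral_const_mul, main k']
  have hfin : narT (k'+1) γ
      = ∑ i ∈ Finset.Icc 1 (k'+1),
          (1 / ((k'+1 : ℕ) : ℝ)) * (Nat.choose (k'+1) i : ℝ)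
            * (Nat.choose (k'+1) (i - 1) : ℝ) * γ ^ i := by
    rw [narT]
    apply Finset.sum_congr rfl
    intro i hi
    simp only [Finset.mem_Icc] at hi
    obtain ⟨j, rfl⟩ : ∃ j, i = j+1 := ⟨i-1, by omega⟩
    simp only [nara, Nat.add_sub_cancel]
    ring
  rw [← hfin]
  have hπ : (2*π) ≠ 0 := by positivity
  field_simp
end

section
/- Let γ ≥ 1 be a real number, set c = (1 − √γ)² and d = (1 + √γ)², and let z > d. Then ∫_{c}^{d} ((x − c)(d − x))^{1/2} / (2πx·(z − x)) dx = (1/2) · (1 − (γ − 1)/z − (1 − 2(γ + 1)/z + (γ − 1)²/z²)^{1/2}). -/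
set_option maxHeartbeats 1000000

open Real

lemma arcsinDeriv {g : ℝ → ℝ} {g' x u : ℝ} (hg : HasDerivAt g g' x) (hu : 0 < u)
    (h1 : 1 - g x ^ 2 = u ^ 2) :
    HasDerivAt (fun y => Real.arcsin (g y)) (g' / u) x := by
  have hgx2 : g x ^ 2 < 1 := by nlinarith
  have h1' : g x ≠ 1 := by
    intro h; rw [h] at hgx2; norm_num at hgx2
  have h2' : g x ≠ -1 := by
    intro h; rw [h] at hgx2; norm_num at hgx2
  have := (Real.hasDerivAt_arcsin h2' h1').comp x hg
  refine this.congr_deriv ?_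
  rw [h1, Real.sqrt_sq hu.le]
  ring

lemma mp_key (c d z : ℝ) (hc0 : 0 ≤ c) (hcd : c < d) (hz : d < z) :
    ∫ x in c..d, Real.sqrt ((x - c) * (d - x)) / (x * (z - x))
      = π * (z - Real.sqrt (c * d) - Real.sqrt ((z - c) * (z - d))) / z := by
  have hd0 : 0 < d := lt_of_le_of_lt hc0 hcd
  have hz0 : 0 < z := hd0.trans hz
  have hdc : 0 < d - c := by linarith
  have hzd : 0 < z - d := by linarith
  have hzc : 0 < z - c := by linarith
  set p := Real.sqrt (c * d) with hpdef
  set q := Real.sqrt ((z - c) * (z - d)) with hqdef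
  have hp0 : 0 ≤ p := Real.sqrt_nonneg _
  have hp2 : p ^ 2 = c * d := Real.sq_sqrt (mul_nonneg hc0 hd0.le)
  have hq0 : 0 < q := Real.sqrt_pos.2 (mul_pos hzc hzd)
  have hq2 : q ^ 2 = (z - c) * (z - d) := Real.sq_sqrt (mul_pos hzc hzd).le
  set H : ℝ → ℝ := fun x =>
    z * Real.arcsin ((2 * x - c - d) / (d - c))
      - p * Real.arcsin (((c + d) * x - 2 * (c * d)) / ((d - c) * x))
      + q * Real.arcsin (((d - c) ^ 2 - (2 * z - c - d) * (2 * x - c - d)) / (2 * (d - c) * (z - x)))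
    with hHdef
  set f' : ℝ → ℝ := fun x => z * Real.sqrt ((x - c) * (d - x)) / (x * (z - x)) with hf'def
  -- derivative
  have hderiv : ∀ x ∈ Set.Ioo c d, HasDerivAt H (f' x) x := by
    intro x hx
    have hxc : 0 < x - c := by linarith [hx.1]
    have hxpos : 0 < x := lt_of_le_of_lt hc0 hx.1
    have hdx : 0 < d - x := by linarith [hx.2]
    have hzx : 0 < z - x := by linarith [hx.2]
    have hQ : 0 < (x - c) * (d - x) := mul_pos hxc hdx
    set w := Real.sqrt ((x - c) * (d - x)) with hwdef
    have hw : 0 < w := Real.sqrt_pos.2 hQ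
    have hw2 : w ^ 2 = (x - c) * (d - x) := Real.sq_sqrt hQ.le
    -- term 1
    have hg1 : HasDerivAt (fun y : ℝ => (2 * y - c - d) / (d - c)) (2 / (d - c)) x := by
      have : HasDerivAt (fun y : ℝ => 2 * y - c - d) 2 x := by
        simpa using (((hasDerivAt_id x).const_mul 2).sub_const c).sub_const d
      simpa using this.div_const (d - c)
    have key1 : 1 - ((2 * x - c - d) / (d - c)) ^ 2 = (2 * w / (d - c)) ^ 2 := by
      have h : (2 * w / (d - c)) ^ 2 = 4 * ((x - c) * (d - x)) / ((d - c) ^ 2) := by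
        rw [div_pow, show (2 * w) ^ 2 = 4 * w ^ 2 by ring, hw2]
      rw [h]
      field_simp
      ring
    have T1 : HasDerivAt (fun y : ℝ => Real.arcsin ((2 * y - c - d) / (d - c))) (1 / w) x := by
      have := arcsinDeriv hg1 (by positivity) key1
      convert this using 1
      field_simp
    -- term 2
    have T2 : HasDerivAt
        (fun y : ℝ => p * Real.arcsin (((c + d) * y - 2 * (c * d)) / ((d - c) * y)))
        (p ^ 2 / (x * w)) x := by
      by_cases hc : c = 0
      · have hp : p = 0 := by rw [hpdef, hc]; simp
        rw [hp]
        simp only [zero_mul, zero_pow, ne_eq, OfNat.ofNat_ne_zero, not_false_eq_true, zero_div]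
        exact hasDerivAt_const x 0
      · have hcpos : 0 < c := lt_of_le_of_ne hc0 (Ne.symm hc)
        have hcd' : 0 < c * d := mul_pos hcpos hd0
        have hpp : 0 < p := Real.sqrt_pos.2 hcd'
        have hnum : HasDerivAt (fun y : ℝ => (c + d) * y - 2 * (c * d)) (c + d) x := by
          simpa using ((hasDerivAt_id x).const_mul (c + d)).sub_const (2 * (c * d))
        have hden : HasDerivAt (fun y : ℝ => (d - c) * y) (d - c) x := by
          simpa using (hasDerivAt_id x).const_mul (d - c)
        have hdenne : (d - c) * x ≠ 0 := by positivity
        have hg2 := hnum.div hden hdenne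
        have key2 : 1 - (((c + d) * x - 2 * (c * d)) / ((d - c) * x)) ^ 2
            = (2 * p * w / ((d - c) * x)) ^ 2 := by
          have h : (2 * p * w / ((d - c) * x)) ^ 2
              = 4 * (c * d) * ((x - c) * (d - x)) / (((d - c) * x) ^ 2) := by
            rw [div_pow, show (2 * p * w) ^ 2 = 4 * p ^ 2 * w ^ 2 by ring, hp2, hw2]
            try ring
          rw [h]
          field_simp
          ring
        have hu2 : 0 < 2 * p * w / ((d - c) * x) := by positivity
        have := (arcsinDeriv hg2 hu2 key2).const_mul p
        refine this.congr_deriv ?_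
        rw [hp2]
        field_simp
        ring
    -- term 3
    have hnum3 : HasDerivAt
        (fun y : ℝ => (d - c) ^ 2 - (2 * z - c - d) * (2 * y - c - d)) (-(2 * (2 * z - c - d))) x := by
      have h1 : HasDerivAt (fun y : ℝ => 2 * y - c - d) 2 x := by
        simpa using (((hasDerivAt_id x).const_mul 2).sub_const c).sub_const d
      simpa [mul_comm] using (h1.const_mul (2 * z - c - d)).const_sub ((d - c) ^ 2)
    have hden3 : HasDerivAt (fun y : ℝ => 2 * (d - c) * (z - y)) (-(2 * (d - c))) x := by
      simpa using ((hasDerivAt_id x).const_sub z).const_mul (2 * (d - c))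
    have hden3ne : 2 * (d - c) * (z - x) ≠ 0 := by positivity
    have hg3 := hnum3.div hden3 hden3ne
    have key3 : 1 - (((d - c) ^ 2 - (2 * z - c - d) * (2 * x - c - d)) / (2 * (d - c) * (z - x))) ^ 2
        = (2 * q * w / ((d - c) * (z - x))) ^ 2 := by
      have h : (2 * q * w / ((d - c) * (z - x))) ^ 2
          = 4 * ((z - c) * (z - d)) * ((x - c) * (d - x)) / (((d - c) * (z - x)) ^ 2) := by
        rw [div_pow, show (2 * q * w) ^ 2 = 4 * q ^ 2 * w ^ 2 by ring, hq2, hw2]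
        try ring
      rw [h]
      field_simp
      ring
    have hu3 : 0 < 2 * q * w / ((d - c) * (z - x)) := by positivity
    have T3' := (arcsinDeriv hg3 hu3 key3).const_mul q
    have T3 : HasDerivAt
        (fun y : ℝ => q * Real.arcsin (((d - c) ^ 2 - (2 * z - c - d) * (2 * y - c - d))
          / (2 * (d - c) * (z - y)))) (-(q ^ 2 / ((z - x) * w))) x := by
      refine T3'.congr_deriv ?_
      rw [hq2]
      field_simp
      ring
    have Hd : HasDerivAt H (z * (1 / w) - p ^ 2 / (x * w) + -(q ^ 2 / ((z - x) * w))) x :=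
      ((T1.const_mul z).sub T2).add T3
    convert Hd using 1
    rw [hf'def]
    simp only
    rw [← hwdef, hp2, hq2]
    field_simp
    linear_combination z * hw2
  -- continuity
  have hcont : ContinuousOn H (Set.Icc c d) := by
    have c1 : ContinuousOn (fun x : ℝ => z * Real.arcsin ((2 * x - c - d) / (d - c)))
        (Set.Icc c d) := by
      apply ContinuousOn.mul continuousOn_const
      exact (Real.continuous_arcsin.comp (by continuity)).continuousOn
    have c2 : ContinuousOn
        (fun x : ℝ => p * Real.arcsin (((c + d) * x - 2 * (c * d)) / ((d - c) * x)))
        (Set.Icc c d) := by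
      by_cases hc : c = 0
      · have hp : p = 0 := by rw [hpdef, hc]; simp
        rw [hp]
        simp only [zero_mul]
        exact continuousOn_const
      · have hcpos : 0 < c := lt_of_le_of_ne hc0 (Ne.symm hc)
        apply ContinuousOn.mul continuousOn_const
        apply Real.continuous_arcsin.comp_continuousOn
        apply ContinuousOn.div (by fun_prop) (by fun_prop)
        intro x hx
        have : 0 < x := lt_of_lt_of_le hcpos hx.1
        positivity
    have c3 : ContinuousOn
        (fun x : ℝ => q * Real.arcsin (((d - c) ^ 2 - (2 * z - c - d) * (2 * x - c - d))
          / (2 * (d - c) * (z - x)))) (Set.Icc c d) := by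
      apply ContinuousOn.mul continuousOn_const
      apply Real.continuous_arcsin.comp_continuousOn
      apply ContinuousOn.div (by fun_prop) (by fun_prop)
      intro x hx
      have : 0 < z - x := by have := hx.2; linarith
      positivity
    exact (c1.sub c2).add c3
  -- integrability
  have hint : IntervalIntegrable f' MeasureTheory.volume c d := by
    by_cases hc : c = 0
    · have hbase : IntervalIntegrable (fun x : ℝ => z * Real.sqrt d / (z - d) * x ^ (-(1/2) : ℝ))
          MeasureTheory.volume c d :=
        (intervalIntegral.intervalIntegrable_rpow' (by norm_num)).const_mul _
      apply hbase.mono_fun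
      · apply Measurable.aestronglyMeasurable
        apply Measurable.div
        · exact (measurable_const.mul ((measurable_id.sub_const c).mul
            ((measurable_const.sub measurable_id))).sqrt)
        · exact (measurable_id.mul (measurable_const.sub measurable_id))
      · rw [Set.uIoc_of_le hcd.le]
        filter_upwards [MeasureTheory.ae_restrict_mem measurableSet_Ioc] with x hx
        have hxpos : 0 < x := by rw [← hc]; exact hx.1
        have hxd : x ≤ d := hx.2
        have hfnn : 0 ≤ f' x := by
          rw [hf'def]
          have : 0 < x * (z - x) := by
            have : 0 < z - x := by linarith
            positivity
          positivity
        have hbnn : (0:ℝ) ≤ z * Real.sqrt d / (z - d) * x ^ (-(1/2) : ℝ) := by positivity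
        rw [Real.norm_of_nonneg hfnn, Real.norm_of_nonneg hbnn]
        -- f' x ≤ bound
        have h1 : Real.sqrt ((x - c) * (d - x)) ≤ Real.sqrt x * Real.sqrt d := by
          rw [← Real.sqrt_mul hxpos.le]
          apply Real.sqrt_le_sqrt
          rw [hc]
          nlinarith
        have h2 : x * (z - d) ≤ x * (z - x) := by nlinarith
        have h3 : f' x ≤ z * (Real.sqrt x * Real.sqrt d) / (x * (z - d)) := by
          rw [hf'def]
          apply div_le_div₀ (by positivity) (by nlinarith [Real.sqrt_nonneg x, Real.sqrt_nonneg d])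
            (by positivity) h2
        refine h3.trans (le_of_eq ?_)
        have hsx : 0 < Real.sqrt x := Real.sqrt_pos.2 hxpos
        have hx12 : x ^ (-(1/2) : ℝ) = 1 / Real.sqrt x := by
          rw [Real.rpow_neg hxpos.le, Real.sqrt_eq_rpow, one_div]
          exact (one_div _).symm
        rw [hx12]
        set t := Real.sqrt x with htdef
        have ht2 : t ^ 2 = x := Real.sq_sqrt hxpos.le
        rw [← ht2]
        field_simp
    · have hcpos : 0 < c := lt_of_le_of_ne hc0 (Ne.symm hc)
      apply ContinuousOn.intervalIntegrable_of_Icc hcd.le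
      rw [hf'def]
      apply ContinuousOn.div (by fun_prop) (by fun_prop)
      intro x hx
      have h1 : 0 < x := lt_of_lt_of_le hcpos hx.1
      have h2 : 0 < z - x := by have := hx.2; linarith
      positivity
  -- FTC
  have hftc : ∫ x in c..d, f' x = H d - H c :=
    intervalIntegral.integral_eq_sub_of_hasDeriv_right_of_le hcd.le hcont
      (fun x hx => (hderiv x hx).hasDerivWithinAt) hint
  -- endpoint values
  have hHd : H d = z * (π / 2) - p * (π / 2) + q * (-(π / 2)) := by
    rw [hHdef]
    simp only
    have e1 : (2 * d - c - d) / (d - c) = 1 := by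
      rw [div_eq_one_iff_eq (by positivity)]; ring
    have e2 : ((c + d) * d - 2 * (c * d)) / ((d - c) * d) = 1 := by
      rw [div_eq_one_iff_eq (by positivity)]; ring
    have e3 : ((d - c) ^ 2 - (2 * z - c - d) * (2 * d - c - d)) / (2 * (d - c) * (z - d))
        = -1 := by
      rw [div_eq_iff (by positivity)]; ring
    rw [e1, e2, e3, Real.arcsin_one, Real.arcsin_neg_one]
  have hHc : H c = z * (-(π / 2)) - p * (-(π / 2)) + q * (π / 2) := by
    rw [hHdef]
    simp only
    have e1 : (2 * c - c - d) / (d - c) = -1 := by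
      rw [div_eq_iff (by positivity)]; ring
    have e3 : ((d - c) ^ 2 - (2 * z - c - d) * (2 * c - c - d)) / (2 * (d - c) * (z - c))
        = 1 := by
      rw [div_eq_one_iff_eq (by positivity)]; ring
    rw [e1, e3, Real.arcsin_one, Real.arcsin_neg_one]
    by_cases hc : c = 0
    · have hp : p = 0 := by rw [hpdef, hc]; simp
      rw [hp]; ring
    · have hcpos : 0 < c := lt_of_le_of_ne hc0 (Ne.symm hc)
      have e2 : ((c + d) * c - 2 * (c * d)) / ((d - c) * c) = -1 := by
        rw [div_eq_iff (by positivity)]; ring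
      rw [e2, Real.arcsin_neg_one]
  -- conclude
  have hstep : ∀ x : ℝ, Real.sqrt ((x - c) * (d - x)) / (x * (z - x)) = f' x / z := by
    intro x
    rw [hf'def]
    simp only
    rw [mul_div_assoc, mul_div_cancel_left₀ _ hz0.ne']
  simp_rw [hstep]
  rw [intervalIntegral.integral_div, hftc, hHd, hHc]
  field_simp
  ring

theorem stmt_9 (γ : ℝ) (hγ : 1 ≤ γ)
    (c d : ℝ) (hc : c = (1 - Real.sqrt γ) ^ 2) (hd : d = (1 + Real.sqrt γ) ^ 2)
    (z : ℝ) (hz : d < z) :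
    ∫ x in c..d, Real.sqrt ((x - c) * (d - x)) / (2 * π * x * (z - x))
      = (1 / 2) * (1 - (γ - 1) / z
          - Real.sqrt (1 - 2 * (γ + 1) / z + (γ - 1) ^ 2 / z ^ 2)) := by
  have hγ0 : (0:ℝ) ≤ γ := by linarith
  set s := Real.sqrt γ with hsdef
  have hs2 : s ^ 2 = γ := Real.sq_sqrt hγ0
  have hs1 : 1 ≤ s := by
    rw [show (1:ℝ) = Real.sqrt 1 by simp [hsdef], hsdef]
    exact Real.sqrt_le_sqrt hγ
  have hc0 : 0 ≤ c := by rw [hc]; positivity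
  have hcd : c < d := by rw [hc, hd]; nlinarith
  have hd0 : 0 < d := lt_of_le_of_lt hc0 hcd
  have hz0 : 0 < z := hd0.trans hz
  have hcdsum : c + d = 2 * (γ + 1) := by rw [hc, hd]; nlinarith
  have hcdprod : c * d = (γ - 1) ^ 2 := by
    rw [hc, hd]; nlinarith [hs2]
  have hsqcd : Real.sqrt (c * d) = γ - 1 := by
    rw [hcdprod, Real.sqrt_sq (by linarith)]
  have hA : 1 - 2 * (γ + 1) / z + (γ - 1) ^ 2 / z ^ 2 = ((z - c) * (z - d)) / z ^ 2 := by
    field_simp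
    linear_combination z * hcdsum - hcdprod
  have hq : Real.sqrt (1 - 2 * (γ + 1) / z + (γ - 1) ^ 2 / z ^ 2)
      = Real.sqrt ((z - c) * (z - d)) / z := by
    rw [hA, Real.sqrt_div (by nlinarith) , Real.sqrt_sq hz0.le]
  have hstep : ∀ x : ℝ, Real.sqrt ((x - c) * (d - x)) / (2 * π * x * (z - x))
      = Real.sqrt ((x - c) * (d - x)) / (x * (z - x)) / (2 * π) := by
    intro x
    rw [div_div, show x * (z - x) * (2 * π) = 2 * π * x * (z - x) by ring]
  simp_rw [hstep]
  rw [intervalIntegral.integral_div, mp_key c d z hc0 hcd hz, hsqcd, hq]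
  have hπ : (π:ℝ) ≠ 0 := Real.pi_ne_zero
  field_simp
end

section
/- Let γ ≥ 1 and b > 0 be real numbers, set c = (1 − √γ)² and d = (1 + √γ)², and consider the averaged secular equation of the rank-one spiked Wishart ensemble with aspect ratio γ, 1 = b · ( (γ − 1)/w + ∫_{c}^{d} ((x − c)(d − x))^{1/2}/(2πx·(w − x)) dx ), as an equation for w in the range w > d. If b > 1 + 1/√γ, then this equation has a unique solution with w > d, namely w = b·(γ + 1/(b − 1)). If 0 < b ≤ 1 + 1/√γ, then the equation has no solution with w > d. -/
open Real


lemma key_integral_s10 (c d w : ℝ) (hc : 0 ≤ c) (hcd : c < d) (hdw : d < w) :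
    ∫ x in c..d, Real.sqrt ((x - c) * (d - x)) / (2 * π * x * (w - x))
      = (w - Real.sqrt (c * d) - Real.sqrt ((w - c) * (w - d))) / (2 * w) := by
  have hd0 : 0 < d := lt_of_le_of_lt hc hcd
  have hw0 : 0 < w := hd0.trans hdw
  have hdc : 0 < d - c := sub_pos.2 hcd
  have hwd : 0 < w - d := sub_pos.2 hdw
  have hwc : 0 < w - c := by linarith
  set e := Real.sqrt (c * d) with he_def
  have he0 : 0 ≤ e := Real.sqrt_nonneg _
  have he2 : e ^ 2 = c * d := Real.sq_sqrt (mul_nonneg hc hd0.le)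
  set W := Real.sqrt ((w - c) * (w - d)) with hW_def
  have hW2 : W ^ 2 = (w - c) * (w - d) := Real.sq_sqrt (by positivity)
  have hW0 : 0 < W := Real.sqrt_pos.2 (by positivity)
  set F : ℝ → ℝ := fun x =>
    (w * arcsin ((2 * x - (c + d)) / (d - c))
      - e * arcsin (((c + d) * x - 2 * (c * d)) / ((d - c) * x))
      + W * arcsin (((2 * w - c - d) * (w - x) - 2 * ((w - c) * (w - d))) / ((d - c) * (w - x))))
      / (2 * π * w) with hF_def
  have hderiv : ∀ x ∈ Set.Ioo c d,
      HasDerivAt F (Real.sqrt ((x - c) * (d - x)) / (2 * π * x * (w - x))) x := by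
    intro x hx
    obtain ⟨hx1, hx2⟩ := hx
    have hx0 : 0 < x := lt_of_le_of_lt hc hx1
    have hxc : 0 < x - c := sub_pos.2 hx1
    have hdx : 0 < d - x := sub_pos.2 hx2
    have hwx : 0 < w - x := by linarith
    set sQ := Real.sqrt ((x - c) * (d - x)) with hsQ_def
    have hsQ2 : sQ ^ 2 = (x - c) * (d - x) := Real.sq_sqrt (by positivity)
    have hsQ0 : 0 < sQ := Real.sqrt_pos.2 (by positivity)
    -- term 1
    have hT1 : HasDerivAt (fun y : ℝ => w * arcsin ((2 * y - (c + d)) / (d - c))) (w / sQ) x := by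
      have hu1 : (2 * x - (c + d)) / (d - c) < 1 := by rw [div_lt_one hdc]; linarith
      have hu2 : -1 < (2 * x - (c + d)) / (d - c) := by
        rw [lt_div_iff₀ hdc]; linarith
      have hinner : HasDerivAt (fun y : ℝ => (2 * y - (c + d)) / (d - c)) (2 / (d - c)) x := by
        have h : HasDerivAt (fun y : ℝ => 2 * y - (c + d)) 2 x := by
          simpa using ((hasDerivAt_id x).const_mul 2).sub_const (c + d)
        exact h.div_const (d - c)
      have hsq1 : Real.sqrt (1 - ((2 * x - (c + d)) / (d - c)) ^ 2) = 2 * sQ / (d - c) := by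
        rw [show 1 - ((2 * x - (c + d)) / (d - c)) ^ 2 = (2 * sQ / (d - c)) ^ 2 by
          rw [show (2 * sQ / (d - c)) ^ 2 = 2 ^ 2 * ((x - c) * (d - x)) / (d - c) ^ 2 by
            rw [div_pow, mul_pow, hsQ2]]
          field_simp
          ring]
        exact Real.sqrt_sq (by positivity)
      have h := ((Real.hasDerivAt_arcsin (ne_of_gt hu2) (ne_of_lt hu1)).comp x hinner).const_mul w
      refine h.congr_deriv ?_
      rw [hsq1]
      field_simp
    -- term 2
    have hT2 : HasDerivAt (fun y : ℝ => e * arcsin (((c + d) * y - 2 * (c * d)) / ((d - c) * y)))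
        (c * d / (x * sQ)) x := by
      rcases hc.eq_or_lt with hc0 | hc0
      · have he0' : e = 0 := by rw [he_def, ← hc0, zero_mul, Real.sqrt_zero]
        have hf : (fun y : ℝ => e * arcsin (((c + d) * y - 2 * (c * d)) / ((d - c) * y)))
            = fun _ => (0 : ℝ) := by
          funext y; rw [he0', zero_mul]
        rw [hf, show c * d / (x * sQ) = 0 by rw [← hc0]; simp]
        exact hasDerivAt_const x 0
      · have he0' : 0 < e := Real.sqrt_pos.2 (by positivity)
        have hDne : (d - c) * x ≠ 0 := by positivity
        have hN : HasDerivAt (fun y : ℝ => (c + d) * y - 2 * (c * d)) (c + d) x := by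
          simpa using ((hasDerivAt_id x).const_mul (c + d)).sub_const (2 * (c * d))
        have hD : HasDerivAt (fun y : ℝ => (d - c) * y) (d - c) x := by
          simpa using (hasDerivAt_id x).const_mul (d - c)
        have hinner := hN.div hD hDne
        have hgsq : 1 - (((c + d) * x - 2 * (c * d)) / ((d - c) * x)) ^ 2
            = (2 * e * sQ / ((d - c) * x)) ^ 2 := by
          rw [show (2 * e * sQ / ((d - c) * x)) ^ 2
              = 2 ^ 2 * (c * d) * ((x - c) * (d - x)) / ((d - c) * x) ^ 2 by
            rw [div_pow, mul_pow, mul_pow, he2, hsQ2]]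
          field_simp
          try ring
        have hgpos : 0 < 1 - (((c + d) * x - 2 * (c * d)) / ((d - c) * x)) ^ 2 := by
          rw [hgsq]; positivity
        have hg1 : ((c + d) * x - 2 * (c * d)) / ((d - c) * x) ≠ 1 := by
          intro h; rw [h] at hgpos; norm_num at hgpos
        have hg2 : ((c + d) * x - 2 * (c * d)) / ((d - c) * x) ≠ -1 := by
          intro h; rw [h] at hgpos; norm_num at hgpos
        have hsq1 : Real.sqrt (1 - (((c + d) * x - 2 * (c * d)) / ((d - c) * x)) ^ 2)
            = 2 * e * sQ / ((d - c) * x) := by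
          rw [hgsq]; exact Real.sqrt_sq (by positivity)
        have h := ((Real.hasDerivAt_arcsin hg2 hg1).comp x hinner).const_mul e
        refine h.congr_deriv ?_
        rw [hsq1]
        field_simp
        ring
    -- term 3
    have hT3 : HasDerivAt (fun y : ℝ =>
        W * arcsin (((2 * w - c - d) * (w - y) - 2 * ((w - c) * (w - d))) / ((d - c) * (w - y))))
        (-((w - c) * (w - d)) / ((w - x) * sQ)) x := by
      have hDne : (d - c) * (w - x) ≠ 0 := by positivity
      have hwy : HasDerivAt (fun y : ℝ => w - y) (-1) x := by
        simpa using (hasDerivAt_id x).const_sub w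
      have hN : HasDerivAt (fun y : ℝ => (2 * w - c - d) * (w - y) - 2 * ((w - c) * (w - d)))
          ((2 * w - c - d) * (-1)) x := (hwy.const_mul (2 * w - c - d)).sub_const _
      have hD : HasDerivAt (fun y : ℝ => (d - c) * (w - y)) ((d - c) * (-1)) x :=
        hwy.const_mul (d - c)
      have hinner := hN.div hD hDne
      have hgsq : 1 - (((2 * w - c - d) * (w - x) - 2 * ((w - c) * (w - d))) / ((d - c) * (w - x))) ^ 2
          = (2 * W * sQ / ((d - c) * (w - x))) ^ 2 := by
        rw [show (2 * W * sQ / ((d - c) * (w - x))) ^ 2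
            = 2 ^ 2 * ((w - c) * (w - d)) * ((x - c) * (d - x)) / ((d - c) * (w - x)) ^ 2 by
          rw [div_pow, mul_pow, mul_pow, hW2, hsQ2]]
        field_simp
        try ring
      have hgpos : 0 < 1 - (((2 * w - c - d) * (w - x) - 2 * ((w - c) * (w - d))) / ((d - c) * (w - x))) ^ 2 := by
        rw [hgsq]; positivity
      have hg1 : ((2 * w - c - d) * (w - x) - 2 * ((w - c) * (w - d))) / ((d - c) * (w - x)) ≠ 1 := by
        intro h; rw [h] at hgpos; norm_num at hgpos
      have hg2 : ((2 * w - c - d) * (w - x) - 2 * ((w - c) * (w - d))) / ((d - c) * (w - x)) ≠ -1 := by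
        intro h; rw [h] at hgpos; norm_num at hgpos
      have hsq1 : Real.sqrt (1 - (((2 * w - c - d) * (w - x) - 2 * ((w - c) * (w - d))) / ((d - c) * (w - x))) ^ 2)
          = 2 * W * sQ / ((d - c) * (w - x)) := by
        rw [hgsq]; exact Real.sqrt_sq (by positivity)
      have h := ((Real.hasDerivAt_arcsin hg2 hg1).comp x hinner).const_mul W
      refine h.congr_deriv ?_
      rw [hsq1]
      field_simp
      ring
    have hsum := ((hT1.sub hT2).add hT3).div_const (2 * π * w)
    refine hsum.congr_deriv (Eq.symm ?_)
    rw [eq_div_iff (by positivity : (2 * π * w : ℝ) ≠ 0)]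
    field_simp
    linear_combination w * hsQ2
  have hFcont : ContinuousOn F (Set.Icc c d) := by
    apply ContinuousOn.div_const
    apply ContinuousOn.add
    apply ContinuousOn.sub
    · apply Continuous.continuousOn
      exact continuous_const.mul (Real.continuous_arcsin.comp
        (((continuous_const.mul continuous_id).sub continuous_const).div_const _))
    · rcases hc.eq_or_lt with hc0 | hc0
      · have he0' : e = 0 := by rw [he_def, ← hc0, zero_mul, Real.sqrt_zero]
        simp only [he0', zero_mul]
        exact continuousOn_const
      · apply ContinuousOn.mul continuousOn_const
        apply Real.continuous_arcsin.comp_continuousOn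
        apply ContinuousOn.div
        · exact (Continuous.continuousOn (by fun_prop))
        · exact (Continuous.continuousOn (by fun_prop))
        · intro y hy
          have : 0 < y := lt_of_lt_of_le hc0 hy.1
          positivity
    · apply ContinuousOn.mul continuousOn_const
      apply Real.continuous_arcsin.comp_continuousOn
      apply ContinuousOn.div
      · exact (Continuous.continuousOn (by fun_prop))
      · exact (Continuous.continuousOn (by fun_prop))
      · intro y hy
        have : 0 < w - y := by have := hy.2; linarith
        positivity
  have hint : IntervalIntegrable
      (fun x => Real.sqrt ((x - c) * (d - x)) / (2 * π * x * (w - x)))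
      MeasureTheory.volume c d := by
    rcases hc.eq_or_lt with hc0 | hc0
    · -- c = 0 : compare with x ^ (-1/2)
      have hbase : IntervalIntegrable
          (fun x : ℝ => Real.sqrt d / (2 * π * (w - d)) * x ^ (-(1/2) : ℝ))
          MeasureTheory.volume c d :=
        (intervalIntegral.intervalIntegrable_rpow' (by norm_num)).const_mul _
      apply hbase.mono_fun
      · apply Measurable.aestronglyMeasurable
        apply Measurable.div
        · exact Real.continuous_sqrt.measurable.comp ((measurable_id.sub_const c).mul
            (measurable_const.sub measurable_id))
        · exact (measurable_const.mul measurable_id).mul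
            (measurable_const.sub measurable_id)
      · rw [Set.uIoc_of_le hcd.le]
        filter_upwards [MeasureTheory.ae_restrict_mem measurableSet_Ioc] with x hx
        have hx0 : 0 < x := lt_of_le_of_lt (le_of_eq hc0) hx.1
        have hxd : x ≤ d := hx.2
        have hwx : 0 < w - x := by linarith
        have hfnn : 0 ≤ Real.sqrt ((x - c) * (d - x)) / (2 * π * x * (w - x)) := by
          apply div_nonneg (Real.sqrt_nonneg _)
          positivity
        have hrnn : (0:ℝ) ≤ Real.sqrt d / (2 * π * (w - d)) * x ^ (-(1/2) : ℝ) := by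
          positivity
        rw [Real.norm_of_nonneg hfnn, Real.norm_of_nonneg hrnn]
        have hxrw : x ^ (-(1/2) : ℝ) = 1 / Real.sqrt x := by
          rw [Real.rpow_neg hx0.le, Real.sqrt_eq_rpow]
          norm_num
        rw [hxrw]
        have hsx : 0 < Real.sqrt x := Real.sqrt_pos.2 hx0
        have hnum : Real.sqrt ((x - c) * (d - x)) ≤ Real.sqrt x * Real.sqrt d := by
          rw [← Real.sqrt_mul hx0.le]
          apply Real.sqrt_le_sqrt
          rw [← hc0]
          nlinarith
        have hxx : x = Real.sqrt x * Real.sqrt x := (Real.mul_self_sqrt hx0.le).symm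
        calc Real.sqrt ((x - c) * (d - x)) / (2 * π * x * (w - x))
            ≤ Real.sqrt x * Real.sqrt d / (2 * π * x * (w - d)) := by
              apply div_le_div₀ (by positivity) hnum (by positivity)
              have : 0 ≤ 2 * π * x := by positivity
              nlinarith [Real.pi_pos]
          _ = Real.sqrt d / (2 * π * (w - d)) * (1 / Real.sqrt x) := by
              rw [div_mul_div_comm, mul_one, div_eq_div_iff (by positivity) (by positivity)]
              linear_combination (Real.sqrt d * 2 * π * (w - d)) * Real.mul_self_sqrt hx0.le
    · -- c > 0 : continuous on [c,d]
      apply ContinuousOn.intervalIntegrable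
      rw [Set.uIcc_of_le hcd.le]
      apply ContinuousOn.div
      · exact (Continuous.continuousOn (by fun_prop))
      · exact (Continuous.continuousOn (by fun_prop))
      · intro y hy
        have h1 : 0 < y := lt_of_lt_of_le hc0 hy.1
        have h2 : 0 < w - y := by have := hy.2; linarith
        positivity
  have hFTC := intervalIntegral.integral_eq_sub_of_hasDerivAt_of_le hcd.le hFcont hderiv hint
  rw [hFTC]
  have hFTC_beta : F d - F c =
      ((w * arcsin ((2 * d - (c + d)) / (d - c))
        - e * arcsin (((c + d) * d - 2 * (c * d)) / ((d - c) * d))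
        + W * arcsin (((2 * w - c - d) * (w - d) - 2 * ((w - c) * (w - d))) / ((d - c) * (w - d))))
        / (2 * π * w))
      - ((w * arcsin ((2 * c - (c + d)) / (d - c))
        - e * arcsin (((c + d) * c - 2 * (c * d)) / ((d - c) * c))
        + W * arcsin (((2 * w - c - d) * (w - c) - 2 * ((w - c) * (w - d))) / ((d - c) * (w - c))))
        / (2 * π * w)) := rfl
  clear_value F e W
  -- endpoint evaluations
  have hA_d : (2 * d - (c + d)) / (d - c) = 1 := by
    rw [div_eq_iff hdc.ne']; ring
  have hA_c : (2 * c - (c + d)) / (d - c) = -1 := by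
    rw [div_eq_iff hdc.ne']; ring
  have hC_d : ((2 * w - c - d) * (w - d) - 2 * ((w - c) * (w - d))) / ((d - c) * (w - d)) = -1 := by
    rw [div_eq_iff (by positivity : (d - c) * (w - d) ≠ 0)]; ring
  have hC_c : ((2 * w - c - d) * (w - c) - 2 * ((w - c) * (w - d))) / ((d - c) * (w - c)) = 1 := by
    rw [div_eq_iff (by positivity : (d - c) * (w - c) ≠ 0)]; ring
  rw [hFTC_beta]
  rw [hA_d, hA_c, hC_d, hC_c, Real.arcsin_one, Real.arcsin_neg_one]
  rcases hc.eq_or_lt with hc0 | hc0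
  · have he0' : e = 0 := by rw [he_def, ← hc0, zero_mul, Real.sqrt_zero]
    rw [he0', div_sub_div_same, div_eq_div_iff (by positivity) (by positivity : (2:ℝ) * w ≠ 0)]
    ring
  · have hB_d : ((c + d) * d - 2 * (c * d)) / ((d - c) * d) = 1 := by
      rw [div_eq_iff (by positivity : (d - c) * d ≠ 0)]; ring
    have hB_c : ((c + d) * c - 2 * (c * d)) / ((d - c) * c) = -1 := by
      rw [div_eq_iff (by positivity : (d - c) * c ≠ 0)]; ring
    rw [hB_d, hB_c, Real.arcsin_one, Real.arcsin_neg_one,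
      div_sub_div_same, div_eq_div_iff (by positivity) (by positivity : (2:ℝ) * w ≠ 0)]
    ring

set_option maxHeartbeats 1600000 in
theorem stmt_10 (γ b : ℝ) (hγ : 1 ≤ γ) (hb : 0 < b)
    (c d : ℝ) (hc : c = (1 - Real.sqrt γ) ^ 2) (hd : d = (1 + Real.sqrt γ) ^ 2) :
    (1 + 1 / Real.sqrt γ < b →
      (d < b * (γ + 1 / (b - 1)) ∧
        1 = b * ((γ - 1) / (b * (γ + 1 / (b - 1)))
            + ∫ x in c..d, Real.sqrt ((x - c) * (d - x))
                / (2 * π * x * (b * (γ + 1 / (b - 1)) - x))) ∧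
        ∀ w : ℝ, d < w →
          1 = b * ((γ - 1) / w
              + ∫ x in c..d, Real.sqrt ((x - c) * (d - x)) / (2 * π * x * (w - x))) →
          w = b * (γ + 1 / (b - 1)))) ∧
    (b ≤ 1 + 1 / Real.sqrt γ → ∀ w : ℝ, d < w →
      1 ≠ b * ((γ - 1) / w
          + ∫ x in c..d, Real.sqrt ((x - c) * (d - x)) / (2 * π * x * (w - x)))) := by
  have hγ0 : (0:ℝ) ≤ γ := by linarith
  have ht1 : (1:ℝ) ≤ Real.sqrt γ := by
    have := Real.sqrt_le_sqrt hγ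
    rwa [Real.sqrt_one] at this
  set t := Real.sqrt γ with ht_def
  have ht0 : 0 < t := by linarith
  have ht2 : t ^ 2 = γ := Real.sq_sqrt hγ0
  clear_value t
  have hc0 : 0 ≤ c := by rw [hc]; positivity
  have hcd : c < d := by rw [hc, hd]; nlinarith
  have hd0 : 0 < d := lt_of_le_of_lt hc0 hcd
  have hsum : c + d = 2 + 2 * γ := by rw [hc, hd]; linear_combination 2 * ht2
  have hprod : c * d = (γ - 1) ^ 2 := by
    rw [hc, hd]; linear_combination (t ^ 2 + γ - 2) * ht2
  have hγd : γ < d := by rw [hd]; nlinarith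
  have hsqcd : Real.sqrt (c * d) = γ - 1 := by
    rw [hprod, Real.sqrt_sq (by linarith)]
  -- equivalence of the equation with an algebraic one
  have heq : ∀ w : ℝ, d < w →
      ((1 = b * ((γ - 1) / w
          + ∫ x in c..d, Real.sqrt ((x - c) * (d - x)) / (2 * π * x * (w - x)))) ↔
        b * Real.sqrt ((w - c) * (w - d)) = b * (w + γ - 1) - 2 * w) := by
    intro w hw
    have hw0 : 0 < w := hd0.trans hw
    rw [key_integral_s10 c d w hc0 hcd hw, hsqcd]
    constructor
    · intro h
      field_simp at h
      have h2 : w * (2 * w) = w * (b * ((γ - 1) * 2 + (w - (γ - 1) - Real.sqrt ((w - c) * (w - d))))) := by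
        linear_combination w * h
      have h3 := mul_left_cancel₀ (ne_of_gt hw0) h2
      linarith
    · intro h
      field_simp
      linear_combination h
  have hquad : ∀ v : ℝ, (v - c) * (v - d) = v ^ 2 - (2 + 2 * γ) * v + (γ - 1) ^ 2 :=
    fun v => by linear_combination (-v) * hsum + hprod
  constructor
  · -- existence and uniqueness for b > 1 + 1/√γ
    intro hb1
    have hbm : 0 < b - 1 := by
      have : 0 < 1 / t := by positivity
      linarith
    have hbt : 1 < (b - 1) * t := by
      have h1 : 1 / t < b - 1 := by linarith
      calc (1:ℝ) = (1 / t) * t := by field_simp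
        _ < (b - 1) * t := by exact mul_lt_mul_of_pos_right h1 ht0
    set w₀ := b * (γ + 1 / (b - 1)) with hw₀
    clear_value w₀
    have key2 : w₀ * (b - 1) = b * (γ * (b - 1) + 1) := by
      rw [hw₀]; field_simp; try ring
    have hw₀d : d < w₀ := by
      have h1 : (w₀ - d) * (b - 1) = ((b - 1) * t - 1) ^ 2 := by
        rw [hd]; linear_combination key2 - (b * (b - 1)) * ht2
      nlinarith [h1, pow_pos (show (0:ℝ) < (b - 1) * t - 1 by linarith) 2]
    have h2 : ((w₀ - c) * (w₀ - d)) * (b - 1) ^ 2 = ((b - 1) ^ 2 * γ - 1) ^ 2 := by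
      rw [hquad w₀]
      linear_combination (w₀ * (b - 1) + b * (γ * (b - 1) + 1) - (2 + 2 * γ) * (b - 1)) * key2
    have hM0 : 0 ≤ ((b - 1) ^ 2 * γ - 1) / (b - 1) := by
      apply div_nonneg _ hbm.le
      nlinarith [hbt, ht2]
    have hW₀ : Real.sqrt ((w₀ - c) * (w₀ - d)) = ((b - 1) ^ 2 * γ - 1) / (b - 1) := by
      rw [show (w₀ - c) * (w₀ - d) = (((b - 1) ^ 2 * γ - 1) / (b - 1)) ^ 2 by
          rw [div_pow, ← h2]; field_simp,
        Real.sqrt_sq hM0]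
    refine ⟨hw₀d, ?_, ?_⟩
    · apply (heq w₀ hw₀d).mpr
      rw [hW₀]
      field_simp
      linear_combination (2 - b) * key2
    · intro w hw heqn
      have hE := (heq w hw).mp heqn
      have hwc' : 0 < w - c := by linarith
      have hwd' : 0 < w - d := by linarith
      have hS2 : Real.sqrt ((w - c) * (w - d)) ^ 2 = (w - c) * (w - d) :=
        Real.sq_sqrt (by positivity)
      have hsq : b ^ 2 * ((w - c) * (w - d)) = (b * (w + γ - 1) - 2 * w) ^ 2 := by
        rw [← hS2, ← mul_pow, hE]
      have h4 : 4 * w * ((b - 1) * w - b * (γ * (b - 1) + 1)) = 0 := by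
        rw [hquad w] at hsq
        linear_combination hsq
      have hw0 : 0 < w := hd0.trans hw
      have h5 : (b - 1) * w = b * (γ * (b - 1) + 1) := by
        rcases mul_eq_zero.mp h4 with h | h
        · exfalso; linarith
        · linarith
      rw [hw₀]
      field_simp
      linear_combination h5
  · -- non-existence for b ≤ 1 + 1/√γ
    intro hble w hw heqn
    have hE := (heq w hw).mp heqn
    have hwc' : 0 < w - c := by linarith
    have hwd' : 0 < w - d := by linarith
    have hw0 : 0 < w := hd0.trans hw
    have hS0 : 0 < Real.sqrt ((w - c) * (w - d)) := Real.sqrt_pos.2 (by positivity)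
    have hS2 : Real.sqrt ((w - c) * (w - d)) ^ 2 = (w - c) * (w - d) :=
      Real.sq_sqrt (by positivity)
    have hsq : b ^ 2 * ((w - c) * (w - d)) = (b * (w + γ - 1) - 2 * w) ^ 2 := by
      rw [← hS2, ← mul_pow, hE]
    have h4 : 4 * w * ((b - 1) * w - b * (γ * (b - 1) + 1)) = 0 := by
      rw [hquad w] at hsq
      linear_combination hsq
    rcases lt_trichotomy b 1 with h | h | h
    · -- b < 1
      have h5 : (b - 1) * w = b * (γ * (b - 1) + 1) := by
        rcases mul_eq_zero.mp h4 with h' | h'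
        · exfalso; linarith
        · linarith
      clear hE hsq heqn hS2 hS0
      have hw_gt : γ < w := lt_trans hγd hw
      have hbg : b * γ ≤ γ := by
        calc b * γ ≤ 1 * γ := mul_le_mul_of_nonneg_right h.le (by linarith)
          _ = γ := one_mul γ
      nlinarith [h5, mul_pos (show (0:ℝ) < 1 - b by linarith)
        (show (0:ℝ) < w - b * γ by linarith)]
    · -- b = 1
      rw [h] at h4
      have : (4:ℝ) * w * ((1 - 1) * w - 1 * (γ * (1 - 1) + 1)) = -(4 * w) := by ring
      rw [this] at h4
      linarith
    · -- 1 < b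
      have h5 : (b - 1) * w = b * (γ * (b - 1) + 1) := by
        rcases mul_eq_zero.mp h4 with h' | h'
        · exfalso; linarith
        · linarith
      have hble' : (b - 1) * t ≤ 1 := by
        have h1 : b - 1 ≤ 1 / t := by linarith
        calc (b - 1) * t ≤ (1 / t) * t := mul_le_mul_of_nonneg_right h1 ht0.le
          _ = 1 := by field_simp
      have hkey : b * ((b - 1) * Real.sqrt ((w - c) * (w - d)))
          = b * (γ * (b - 1) ^ 2 - 1) := by
        linear_combination (b - 1) * hE + (b - 2) * h5
      have h6 : (b - 1) * Real.sqrt ((w - c) * (w - d)) = γ * (b - 1) ^ 2 - 1 :=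
        mul_left_cancel₀ (ne_of_gt hb) hkey
      have hSpos := mul_pos (sub_pos.2 h) hS0
      clear hE hsq heqn hS2 hkey h4 h5 heq hquad
      have h7 : γ * (b - 1) ^ 2 ≤ 1 := by
        nlinarith [hble', mul_nonneg (le_of_lt (sub_pos.2 h)) ht0.le, ht2]
      linarith [hSpos, h6, h7]
end

section
/- Let m ≥ 1 be an integer, let 0 < λ_1 < λ_2 < ⋯ < λ_m be real numbers, and let μ > 0. Consider the equation 1 = μ · Σ_{j=1}^{m} x/(x² − λ_j²) for x > 0 with x ∉ {λ_1, …, λ_m}. Then this equation has exactly m solutions x_1 < x_2 < ⋯ < x_m, and they interlace with the λ_j: λ_j < x_j < λ_{j+1} for j = 1, …, m−1, and λ_m < x_m; in particular there is no solution in (0, λ_1). -/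
open Filter Topology Set

private lemma aux_term_lt {s t c : ℝ} (hs : 0 < s) (hst : s < t) (hc : 0 ≤ c)
    (hprod : 0 < (s ^ 2 - c) * (t ^ 2 - c)) :
    t / (t ^ 2 - c) < s / (s ^ 2 - c) := by
  have ha : s ^ 2 - c ≠ 0 := by
    intro h; rw [h, zero_mul] at hprod; exact lt_irrefl _ hprod
  have hb : t ^ 2 - c ≠ 0 := by
    intro h; rw [h, mul_zero] at hprod; exact lt_irrefl _ hprod
  have key : s / (s ^ 2 - c) - t / (t ^ 2 - c)
      = ((t - s) * (s * t + c)) / ((s ^ 2 - c) * (t ^ 2 - c)) := by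
    field_simp
    ring
  have h2 : 0 < s / (s ^ 2 - c) - t / (t ^ 2 - c) := by
    rw [key]; exact div_pos (mul_pos (by linarith) (by nlinarith [mul_pos hs (hs.trans hst)])) hprod
  linarith

private lemma aux_anti {m : ℕ} (lam : Fin m → ℝ) (hpos : ∀ j, 0 < lam j)
    (hmono : StrictMono lam) (j : Fin m) {s t : ℝ}
    (hs1 : lam j < s) (_hs2 : ∀ k : Fin m, (j : ℕ) < (k : ℕ) → s < lam k)
    (ht1 : lam j < t) (ht2 : ∀ k : Fin m, (j : ℕ) < (k : ℕ) → t < lam k)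
    (hst : s < t) :
    ∑ k, t / (t ^ 2 - lam k ^ 2) < ∑ k, s / (s ^ 2 - lam k ^ 2) := by
  have : Nonempty (Fin m) := ⟨j⟩
  have hs0 : 0 < s := (hpos j).trans hs1
  refine Finset.sum_lt_sum_of_nonempty Finset.univ_nonempty ?_
  intro k _
  refine aux_term_lt hs0 hst (sq_nonneg _) ?_
  rcases le_or_gt (k : ℕ) (j : ℕ) with hk | hk
  · have hlk : lam k ≤ lam j := hmono.monotone (Fin.le_def.mpr hk)
    have h1 : lam k < s := lt_of_le_of_lt hlk hs1
    have h2 : lam k < t := lt_of_le_of_lt hlk ht1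
    have := hpos k
    apply mul_pos <;> nlinarith
  · have h1 : s < lam k := _hs2 k hk
    have h2 : t < lam k := ht2 k hk
    have ht0 : 0 < t := hs0.trans hst
    apply mul_pos_of_neg_of_neg <;> nlinarith

private lemma aux_sign {m : ℕ} (lam : Fin m → ℝ) (hpos : ∀ j, 0 < lam j)
    (hmono : StrictMono lam) (j : Fin m) {y : ℝ}
    (hy1 : lam j < y) (hy2 : ∀ k : Fin m, (j : ℕ) < (k : ℕ) → y < lam k)
    (k : Fin m) : y ^ 2 - lam k ^ 2 ≠ 0 := by
  have hy0 : 0 < y := (hpos j).trans hy1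
  rcases le_or_gt (k : ℕ) (j : ℕ) with hk | hk
  · have hlk : lam k ≤ lam j := hmono.monotone (Fin.le_def.mpr hk)
    have := hpos k
    nlinarith [lt_of_le_of_lt hlk hy1]
  · have := hy2 k hk
    nlinarith

private lemma aux_sq_ne {m : ℕ} (lam : Fin m → ℝ) (hpos : ∀ j, 0 < lam j)
    (hmono : StrictMono lam) {j k : Fin m} (hjk : k ≠ j) :
    lam j ^ 2 - lam k ^ 2 ≠ 0 := by
  rcases hjk.lt_or_gt with h | h
  · have h1 := hmono h; have h2 := hpos k; have h3 := hpos j; nlinarith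
  · have h1 := hmono h; have h2 := hpos k; have h3 := hpos j; nlinarith

private lemma aux_cont {m : ℕ} (lam : Fin m → ℝ) {t : ℝ}
    (h : ∀ k : Fin m, t ^ 2 - lam k ^ 2 ≠ 0) :
    ContinuousAt (fun y => ∑ k, y / (y ^ 2 - lam k ^ 2)) t :=
  tendsto_finset_sum _ fun k _ =>
    ContinuousAt.div continuousAt_id (by fun_prop) (h k)

private lemma aux_left {m : ℕ} (lam : Fin m → ℝ) (hpos : ∀ j, 0 < lam j)
    (hmono : StrictMono lam) (j : Fin m) :
    Tendsto (fun y => ∑ k, y / (y ^ 2 - lam k ^ 2)) (𝓝[>] lam j) atTop := by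
  have main : Tendsto (fun y => y / (y ^ 2 - lam j ^ 2)) (𝓝[>] lam j) atTop := by
    simp only [div_eq_mul_inv]
    refine Tendsto.pos_mul_atTop (hpos j) (tendsto_id.mono_left nhdsWithin_le_nhds) ?_
    refine tendsto_inv_nhdsGT_zero.comp ?_
    rw [tendsto_nhdsWithin_iff]
    constructor
    · have hc : Tendsto (fun y : ℝ => y ^ 2 - lam j ^ 2) (𝓝 (lam j))
          (𝓝 (lam j ^ 2 - lam j ^ 2)) := (Continuous.tendsto (by fun_prop) _)
      simpa using hc.mono_left (nhdsWithin_le_nhds (s := Set.Ioi (lam j)))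
    · filter_upwards [self_mem_nhdsWithin] with y hy
      have := hpos j
      simp only [Set.mem_Ioi] at hy ⊢
      nlinarith
  have rest : Tendsto (fun y => ∑ k ∈ Finset.univ.erase j, y / (y ^ 2 - lam k ^ 2))
      (𝓝[>] lam j)
      (𝓝 (∑ k ∈ Finset.univ.erase j, lam j / (lam j ^ 2 - lam k ^ 2))) := by
    refine Tendsto.mono_left ?_ nhdsWithin_le_nhds
    exact tendsto_finset_sum _ fun k hk =>
      ContinuousAt.div continuousAt_id (by fun_prop)
        (aux_sq_ne lam hpos hmono (Finset.ne_of_mem_erase hk))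
  exact (rest.add_atTop main).congr fun y => Finset.sum_erase_add _ _ (Finset.mem_univ j)

private lemma aux_right {m : ℕ} (lam : Fin m → ℝ) (hpos : ∀ j, 0 < lam j)
    (hmono : StrictMono lam) (k0 : Fin m) :
    Tendsto (fun y => ∑ k, y / (y ^ 2 - lam k ^ 2)) (𝓝[<] lam k0) atBot := by
  have main : Tendsto (fun y => y / (y ^ 2 - lam k0 ^ 2)) (𝓝[<] lam k0) atBot := by
    have h1 : Tendsto (fun y : ℝ => y * (lam k0 ^ 2 - y ^ 2)⁻¹) (𝓝[<] lam k0) atTop := by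
      refine Tendsto.pos_mul_atTop (hpos k0) (tendsto_id.mono_left nhdsWithin_le_nhds) ?_
      refine tendsto_inv_nhdsGT_zero.comp ?_
      rw [tendsto_nhdsWithin_iff]
      constructor
      · have hc : Tendsto (fun y : ℝ => lam k0 ^ 2 - y ^ 2) (𝓝 (lam k0))
            (𝓝 (lam k0 ^ 2 - lam k0 ^ 2)) := (Continuous.tendsto (by fun_prop) _)
        simpa using hc.mono_left (nhdsWithin_le_nhds (s := Set.Iio (lam k0)))
      · filter_upwards [Ioo_mem_nhdsLT (hpos k0)] with y hy
        simp only [Set.mem_Ioi]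
        have h1 := hy.1; have h2 := hy.2
        nlinarith
    have h2 := tendsto_neg_atTop_atBot.comp h1
    refine h2.congr fun y => ?_
    show -(y * (lam k0 ^ 2 - y ^ 2)⁻¹) = y / (y ^ 2 - lam k0 ^ 2)
    rw [div_eq_mul_inv, ← neg_sub (lam k0 ^ 2) (y ^ 2), inv_neg, mul_neg]
  have rest : Tendsto (fun y => ∑ k ∈ Finset.univ.erase k0, y / (y ^ 2 - lam k ^ 2))
      (𝓝[<] lam k0)
      (𝓝 (∑ k ∈ Finset.univ.erase k0, lam k0 / (lam k0 ^ 2 - lam k ^ 2))) := by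
    refine Tendsto.mono_left ?_ nhdsWithin_le_nhds
    exact tendsto_finset_sum _ fun k hk =>
      ContinuousAt.div continuousAt_id (by fun_prop)
        (aux_sq_ne lam hpos hmono (Finset.ne_of_mem_erase hk))
  exact (rest.add_atBot main).congr fun y => Finset.sum_erase_add _ _ (Finset.mem_univ k0)

private lemma aux_term_infty (c : ℝ) :
    Tendsto (fun y : ℝ => y / (y ^ 2 - c)) atTop (𝓝 0) := by
  have h1 : Tendsto (fun y : ℝ => y + -(c / y)) atTop atTop :=
    tendsto_id.atTop_add (Tendsto.div_atTop tendsto_const_nhds tendsto_id).neg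
  have h2 := h1.inv_tendsto_atTop
  refine h2.congr' ?_
  filter_upwards [eventually_gt_atTop (0 : ℝ)] with y hy
  have hy0 : y ≠ 0 := ne_of_gt hy
  show (y + -(c / y))⁻¹ = y / (y ^ 2 - c)
  have : y + -(c / y) = (y ^ 2 - c) / y := by field_simp; ring
  rw [this, inv_div]

private lemma aux_infty {m : ℕ} (lam : Fin m → ℝ) :
    Tendsto (fun y => ∑ k, y / (y ^ 2 - lam k ^ 2)) atTop (𝓝 0) := by
  have := tendsto_finset_sum (Finset.univ : Finset (Fin m))
    (fun k _ => aux_term_infty (lam k ^ 2))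
  simpa using this

private lemma aux_exists {m : ℕ} (lam : Fin m → ℝ) (hpos : ∀ j, 0 < lam j)
    (hmono : StrictMono lam) {μ : ℝ} (hμ : 0 < μ) (j : Fin m) :
    ∃ y : ℝ, lam j < y ∧ (∀ k : Fin m, (j : ℕ) < (k : ℕ) → y < lam k) ∧
      ∑ k, y / (y ^ 2 - lam k ^ 2) = 1 / μ := by
  -- choose a bound B
  set g : ℝ → ℝ := fun y => ∑ k, y / (y ^ 2 - lam k ^ 2) with hg
  have hBex : ∃ B : ℝ, lam j < B ∧ ∀ y ∈ Set.Ioo (lam j) B,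
      ∀ k : Fin m, (j : ℕ) < (k : ℕ) → y < lam k := by
    by_cases h : (j : ℕ) + 1 < m
    · refine ⟨lam ⟨(j : ℕ) + 1, h⟩, hmono (by simp [Fin.lt_def]), ?_⟩
      intro y hy k hk
      have : lam ⟨(j : ℕ) + 1, h⟩ ≤ lam k := by
        apply hmono.monotone
        rw [Fin.le_def]
        exact hk
      exact lt_of_lt_of_le hy.2 this
    · refine ⟨lam j + 1, by linarith, ?_⟩
      intro y _ k hk
      exact absurd (lt_of_le_of_lt (Nat.succ_le_of_lt hk) k.isLt) h
  obtain ⟨B, hB1, hB2⟩ := hBex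
  -- pick a with g a > 1/μ
  have h1 : ∀ᶠ y in 𝓝[>] lam j, 1 / μ < g y ∧ y ∈ Set.Ioo (lam j) B := by
    refine ((aux_left lam hpos hmono j).eventually_gt_atTop _).and ?_
    exact eventually_mem_set.mpr (Ioo_mem_nhdsGT hB1)
  obtain ⟨a, ha1, ha2⟩ := h1.exists
  have haS : ∀ k : Fin m, (j : ℕ) < (k : ℕ) → a < lam k := hB2 a ha2
  -- pick b with g b < 1/μ, a < b, b in the slot
  have hbex : ∃ b : ℝ, a < b ∧ g b < 1 / μ ∧
      (∀ k : Fin m, (j : ℕ) < (k : ℕ) → b < lam k) := by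
    by_cases h : (j : ℕ) + 1 < m
    · set k0 : Fin m := ⟨(j : ℕ) + 1, h⟩ with hk0
      have hjk0 : lam j < lam k0 := hmono (by simp [hk0, Fin.lt_def])
      have hak0 : a < lam k0 := haS k0 (by simp [hk0, Fin.lt_def])
      have h2 : ∀ᶠ y in 𝓝[<] lam k0, g y < 1 / μ ∧ y ∈ Set.Ioo a (lam k0) := by
        refine ((aux_right lam hpos hmono k0).eventually_lt_atBot _).and ?_
        exact eventually_mem_set.mpr (Ioo_mem_nhdsLT hak0)
      obtain ⟨b, hb1, hb2⟩ := h2.exists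
      refine ⟨b, hb2.1, hb1, ?_⟩
      intro k hk
      have : lam k0 ≤ lam k := by
        apply hmono.monotone; rw [Fin.le_def]; exact hk
      exact lt_of_lt_of_le hb2.2 this
    · have h2 : ∀ᶠ y in atTop, g y < 1 / μ ∧ a < y := by
        refine ((aux_infty lam).eventually_lt_const (by positivity)).and
          (eventually_gt_atTop a)
      obtain ⟨b, hb1, hb2⟩ := h2.exists
      refine ⟨b, hb2, hb1, ?_⟩
      intro k hk
      exact absurd (lt_of_le_of_lt (Nat.succ_le_of_lt hk) k.isLt) h
  obtain ⟨b, hab, hgb, hbS⟩ := hbex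
  -- IVT
  have hsub : ∀ y ∈ Set.Icc a b, lam j < y ∧
      ∀ k : Fin m, (j : ℕ) < (k : ℕ) → y < lam k := by
    intro y hy
    refine ⟨lt_of_lt_of_le ha2.1 hy.1, fun k hk => lt_of_le_of_lt hy.2 (hbS k hk)⟩
  have hcont : ContinuousOn g (Set.Icc a b) := fun y hy =>
    (aux_cont lam (aux_sign lam hpos hmono j (hsub y hy).1 (hsub y hy).2)).continuousWithinAt
  have hmem : (1 : ℝ) / μ ∈ Set.Icc (g b) (g a) := ⟨le_of_lt hgb, le_of_lt ha1⟩
  obtain ⟨y, hy, hgy⟩ := intermediate_value_Icc' (le_of_lt hab) hcont hmem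
  exact ⟨y, (hsub y hy).1, (hsub y hy).2, hgy⟩

private lemma aux_neg {m : ℕ} (hm : 1 ≤ m) (lam : Fin m → ℝ) (hpos : ∀ j, 0 < lam j)
    (hmono : StrictMono lam) {t : ℝ} (ht : 0 < t) (h0 : t < lam ⟨0, hm⟩) :
    ∑ k, t / (t ^ 2 - lam k ^ 2) < 0 := by
  have : Nonempty (Fin m) := ⟨⟨0, hm⟩⟩
  refine Finset.sum_neg ?_ Finset.univ_nonempty
  intro k _
  have h1 : lam ⟨0, hm⟩ ≤ lam k := hmono.monotone (Fin.le_def.mpr (Nat.zero_le _))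
  have h2 : t < lam k := lt_of_lt_of_le h0 h1
  exact div_neg_of_pos_of_neg ht (by nlinarith)

theorem stmt_13 (m : ℕ) (hm : 1 ≤ m) (lam : Fin m → ℝ)
    (hpos : ∀ j, 0 < lam j) (hmono : StrictMono lam) (μ : ℝ) (hμ : 0 < μ) :
    ∃ x : Fin m → ℝ,
      StrictMono x ∧
      (∀ j, lam j < x j) ∧
      (∀ j : Fin m, ∀ h : (j : ℕ) + 1 < m, x j < lam ⟨(j : ℕ) + 1, h⟩) ∧
      (∀ t : ℝ, 0 < t → (∀ j, t ≠ lam j) →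
        ((1 = μ * ∑ j, t / (t ^ 2 - lam j ^ 2)) ↔ ∃ j, t = x j)) ∧
      (∀ t : ℝ, 0 < t → t < lam ⟨0, hm⟩ →
        1 ≠ μ * ∑ j, t / (t ^ 2 - lam j ^ 2)) := by
  choose x hx1 hx2 hx3 using fun j => aux_exists lam hpos hmono hμ j
  have huniq : ∀ (j : Fin m) {y z : ℝ},
      lam j < y → (∀ k : Fin m, (j : ℕ) < (k : ℕ) → y < lam k) →
      lam j < z → (∀ k : Fin m, (j : ℕ) < (k : ℕ) → z < lam k) →
      (∑ k, y / (y ^ 2 - lam k ^ 2)) = (∑ k, z / (z ^ 2 - lam k ^ 2)) → y = z := by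
    intro j y z hy1 hy2 hz1 hz2 hgz
    rcases lt_trichotomy y z with h | h | h
    · have := aux_anti lam hpos hmono j hy1 hy2 hz1 hz2 h
      exact absurd hgz (by linarith)
    · exact h
    · have := aux_anti lam hpos hmono j hz1 hz2 hy1 hy2 h
      exact absurd hgz (by linarith)
  refine ⟨x, ?_, hx1, ?_, ?_, ?_⟩
  · -- StrictMono
    intro j j' hjj'
    have hj : ((j : ℕ) : ℕ) < (j' : ℕ) := hjj'
    have h1 : x j < lam j' := hx2 j j' hj
    exact h1.trans (hx1 j')
  · -- x j < lam (j+1)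
    intro j h
    exact hx2 j ⟨(j : ℕ) + 1, h⟩ (by simp)
  · -- the iff
    intro t ht htne
    constructor
    · intro heq
      have hS : ∑ k, t / (t ^ 2 - lam k ^ 2) = 1 / μ := by
        rw [eq_div_iff (ne_of_gt hμ)]
        linear_combination -heq
      have h0 : lam ⟨0, hm⟩ < t := by
        rcases lt_trichotomy t (lam ⟨0, hm⟩) with h | h | h
        · have := aux_neg hm lam hpos hmono ht h
          have : (0:ℝ) < 1 / μ := by positivity
          linarith [hS ▸ ‹∑ k, t / (t ^ 2 - lam k ^ 2) < 0›]
        · exact absurd h (htne _)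
        · exact h
      set F : Finset (Fin m) := Finset.univ.filter (fun k => lam k < t) with hF
      have hFne : F.Nonempty := ⟨⟨0, hm⟩, by simp [hF, h0]⟩
      set j := F.max' hFne with hj
      have hjmem : j ∈ F := F.max'_mem hFne
      have hjt : lam j < t := by
        have := hjmem
        simp [hF] at this
        exact this
      have hjt2 : ∀ k : Fin m, (j : ℕ) < (k : ℕ) → t < lam k := by
        intro k hk
        have hknot : k ∉ F := by
          intro hmem
          have := F.le_max' k hmem
          rw [← hj] at this
          exact absurd (Fin.lt_def.mpr hk) (not_lt.mpr this)
        have : ¬ lam k < t := by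
          intro hlt
          exact hknot (by simp [hF, hlt])
        rcases lt_or_eq_of_le (not_lt.mp this) with h | h
        · exact h
        · exact absurd h (htne k)
      refine ⟨j, huniq j hjt hjt2 (hx1 j) (hx2 j) ?_⟩
      rw [hS, hx3 j]
    · rintro ⟨j, rfl⟩
      rw [hx3 j, one_div, mul_inv_cancel₀ (ne_of_gt hμ)]
  · -- no solution below lam 0
    intro t ht h0 heq
    have hS : ∑ k, t / (t ^ 2 - lam k ^ 2) = 1 / μ := by
      rw [eq_div_iff (ne_of_gt hμ)]
      linear_combination -heq
    have h1 := aux_neg hm lam hpos hmono ht h0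
    have h2 : (0:ℝ) < 1 / μ := by positivity
    linarith [hS ▸ h1]
end

section
/- Let q ≥ 1 be an integer, let c > 0 and x be real numbers, and let R > 2c. Then the contour integral (1/(2πi)) ∮_{|z|=R} e^{−xz − z²/4} / (z^q (z + 2c)) dz (whose value is independent of the choice of R > 2c) equals (−1)^q · ( e^{2cx − c²}/(2c)^q − Σ_{p=0}^{q−1} (1/(2c)^{p+1}) · H_{q−1−p}(x)/(2^{q−1−p}·(q−1−p)!) ). -/
open Real Nat

/-- Physicists' Hermite polynomial
`H_n(x) = n! · Σ_{j=0}^{⌊n/2⌋} (−1)^j (2x)^{n−2j}/(j!·(n−2j)!)`. -/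
noncomputable def hermiteH (n : ℕ) (x : ℝ) : ℝ :=
  (n ! : ℝ) * ∑ j ∈ Finset.range (n / 2 + 1),
    (-1 : ℝ) ^ j * (2 * x) ^ (n - 2 * j) / ((j ! : ℝ) * ((n - 2 * j)! : ℝ))



noncomputable def hS (n : ℕ) (y : ℂ) : ℂ :=
  ∑ j ∈ Finset.range (n / 2 + 1),
    (-1 : ℂ) ^ j * (2 * y) ^ (n - 2 * j) / ((j ! : ℂ) * ((n - 2 * j)! : ℂ))

lemma hS_guard (n K : ℕ) (h : n / 2 + 1 ≤ K) (y : ℂ) :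
    hS n y = ∑ j ∈ Finset.range K,
      if 2 * j ≤ n then (-1 : ℂ) ^ j * (2 * y) ^ (n - 2 * j) / ((j ! : ℂ) * ((n - 2 * j)! : ℂ))
      else 0 := by
  rw [hS]
  refine (Finset.sum_congr rfl fun j hj => ?_).trans
    (Finset.sum_subset (Finset.range_subset_range.2 h) fun j _ hj => if_neg (by
      simp only [Finset.mem_range, not_lt] at hj ⊢; omega))
  rw [if_pos (by simp only [Finset.mem_range] at hj; omega)]

lemma hS_zero (y : ℂ) : hS 0 y = 1 := by norm_num [hS]

lemma hS_one (y : ℂ) : hS 1 y = 2 * y := by norm_num [hS]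

lemma hS_rec (n : ℕ) (y : ℂ) :
    ((n : ℂ) + 2) * hS (n + 2) y = 2 * y * hS (n + 1) y - 2 * hS n y := by
  set T : ℕ → ℕ → ℂ := fun m j =>
    if 2 * j ≤ m then (-1 : ℂ) ^ j * (2 * y) ^ (m - 2 * j) / ((j ! : ℂ) * ((m - 2 * j)! : ℂ))
    else 0 with hT
  have e2 : hS (n + 2) y = ∑ j ∈ Finset.range (n / 2 + 2), T (n + 2) j :=
    hS_guard _ _ (by omega) y
  have e1 : hS (n + 1) y = ∑ j ∈ Finset.range (n / 2 + 2), T (n + 1) j :=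
    hS_guard _ _ (by omega) y
  have e0 : hS n y = ∑ j ∈ Finset.range (n / 2 + 2), T n j :=
    hS_guard _ _ (by omega) y
  have key : ∀ j : ℕ, ((n : ℂ) + 2) * T (n + 2) (j + 1) - 2 * y * T (n + 1) (j + 1)
      = -(2 * T n j) := by
    intro j
    by_cases h : 2 * j ≤ n
    · by_cases h' : 2 * j + 1 ≤ n
      · obtain ⟨m, hm⟩ : ∃ m, n = 2 * j + m + 1 := ⟨n - 2 * j - 1, by omega⟩
        have c2 : 2 * (j + 1) ≤ n + 2 := by omega
        have c1 : 2 * (j + 1) ≤ n + 1 := by omega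
        have g2 : n + 2 - 2 * (j + 1) = m + 1 := by omega
        have g1 : n + 1 - 2 * (j + 1) = m := by omega
        have g0 : n - 2 * j = m + 1 := by omega
        simp only [hT, if_pos c2, if_pos c1, if_pos h, g2, g1, g0]
        have hn : (n : ℂ) = 2 * j + m + 1 := by exact_mod_cast congrArg (Nat.cast : ℕ → ℂ) hm
        rw [hn, Nat.factorial_succ (j), Nat.factorial_succ m, pow_succ]
        have hj : ((j ! : ℂ)) ≠ 0 := Nat.cast_ne_zero.2 (Nat.factorial_ne_zero j)
        have hmf : ((m ! : ℂ)) ≠ 0 := Nat.cast_ne_zero.2 (Nat.factorial_ne_zero m)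
        have hj1 : ((j : ℂ) + 1) ≠ 0 := Nat.cast_add_one_ne_zero j
        have hm1 : ((m : ℂ) + 1) ≠ 0 := Nat.cast_add_one_ne_zero m
        push_cast
        field_simp
        ring
      · have hn : n = 2 * j := by omega
        subst hn
        have c2 : 2 * (j + 1) ≤ 2 * j + 2 := by omega
        have c1 : ¬ (2 * (j + 1) ≤ 2 * j + 1) := by omega
        have g2 : 2 * j + 2 - 2 * (j + 1) = 0 := by omega
        have g0 : 2 * j - 2 * j = 0 := by omega
        simp only [hT, if_pos c2, if_neg c1, if_pos le_rfl, g2, g0]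
        rw [Nat.factorial_succ j, pow_succ]
        have hj : ((j ! : ℂ)) ≠ 0 := Nat.cast_ne_zero.2 (Nat.factorial_ne_zero j)
        have hj1 : ((j : ℂ) + 1) ≠ 0 := Nat.cast_add_one_ne_zero j
        push_cast
        field_simp
        ring
    · have c2 : ¬ (2 * (j + 1) ≤ n + 2) := by omega
      have c1 : ¬ (2 * (j + 1) ≤ n + 1) := by omega
      simp [hT, if_neg c2, if_neg c1, if_neg h]
  have main : ((n : ℂ) + 2) * (∑ j ∈ Finset.range (n / 2 + 2), T (n + 2) j)
      - 2 * y * (∑ j ∈ Finset.range (n / 2 + 2), T (n + 1) j)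
      = -(2 * ∑ j ∈ Finset.range (n / 2 + 2), T n j) := by
    rw [Finset.mul_sum, Finset.mul_sum, ← Finset.sum_sub_distrib,
      Finset.sum_range_succ' (fun j => ((n : ℂ) + 2) * T (n + 2) j - 2 * y * T (n + 1) j)]
    have f0 : ((n : ℂ) + 2) * T (n + 2) 0 - 2 * y * T (n + 1) 0 = 0 := by
      have g2 : n + 2 - 2 * 0 = (n + 1) + 1 := by omega
      have g1 : n + 1 - 2 * 0 = n + 1 := by omega
      simp only [hT, if_pos (by omega : 2 * 0 ≤ n + 2), if_pos (by omega : 2 * 0 ≤ n + 1),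
        g2, g1, Nat.factorial_zero, Nat.factorial_succ (n + 1), pow_succ]
      have h1 : (((n + 1)! : ℂ)) ≠ 0 := Nat.cast_ne_zero.2 (Nat.factorial_ne_zero _)
      have h2 : ((n : ℂ) + 1 + 1) ≠ 0 := by
        have := Nat.cast_add_one_ne_zero (R := ℂ) (n + 1)
        push_cast at this ⊢
        exact this
      push_cast
      field_simp
      ring
    rw [f0, add_zero, Finset.sum_congr rfl (fun j _ => key j),
      Finset.sum_range_succ (fun j => T n j) (n / 2 + 1)]
    have hlast : T n (n / 2 + 1) = 0 := if_neg (by omega)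
    rw [hlast, add_zero, Finset.mul_sum, ← Finset.sum_neg_distrib]
  rw [e2, e1, e0]
  linear_combination main

lemma hS_deriv (n : ℕ) (y : ℂ) :
    HasDerivAt (fun y : ℂ => hS (n + 1) y) (2 * hS n y) y := by
  have hterm : ∀ j : ℕ, HasDerivAt
      (fun y : ℂ => (-1 : ℂ) ^ j * (2 * y) ^ (n + 1 - 2 * j) / ((j ! : ℂ) * (((n + 1 - 2 * j))! : ℂ)))
      ((-1 : ℂ) ^ j * (((n + 1 - 2 * j : ℕ) : ℂ) * (2 * y) ^ (n + 1 - 2 * j - 1) * 2)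
        / ((j ! : ℂ) * (((n + 1 - 2 * j))! : ℂ))) y := by
    intro j
    have h2y : HasDerivAt (fun y : ℂ => 2 * y) 2 y := by
      simpa using (hasDerivAt_id y).const_mul (2 : ℂ)
    have hp : HasDerivAt (fun y : ℂ => (2 * y) ^ (n + 1 - 2 * j))
        ((((n + 1 - 2 * j : ℕ) : ℂ)) * (2 * y) ^ (n + 1 - 2 * j - 1) * 2) y :=
      (hasDerivAt_pow (n + 1 - 2 * j) (2 * y)).comp y h2y
    exact (hp.const_mul ((-1 : ℂ) ^ j)).div_const _ |>.congr_deriv (by ring)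
  have hsum : HasDerivAt (fun y : ℂ => hS (n + 1) y)
      (∑ j ∈ Finset.range ((n + 1) / 2 + 1),
        (-1 : ℂ) ^ j * (((n + 1 - 2 * j : ℕ) : ℂ) * (2 * y) ^ (n + 1 - 2 * j - 1) * 2)
          / ((j ! : ℂ) * (((n + 1 - 2 * j))! : ℂ))) y := by
    have := HasDerivAt.sum (fun j (_ : j ∈ Finset.range ((n + 1) / 2 + 1)) => hterm j)
    refine this.congr_of_eventuallyEq (Filter.Eventually.of_forall fun z => ?_)
    simp only [hS, Finset.sum_apply]
  refine hsum.congr_deriv ?_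
  rw [hS_guard n ((n + 1) / 2 + 1) (by omega) y, Finset.mul_sum]
  refine Finset.sum_congr rfl fun j hj => ?_
  simp only [Finset.mem_range] at hj
  by_cases h : 2 * j ≤ n
  · obtain ⟨m, hm⟩ : ∃ m, n = 2 * j + m := ⟨n - 2 * j, by omega⟩
    have g1 : n + 1 - 2 * j = m + 1 := by omega
    have g2 : n + 1 - 2 * j - 1 = m := by omega
    have g0 : n - 2 * j = m := by omega
    rw [if_pos h, g2, g1, g0, Nat.factorial_succ m]
    have hj' : ((j ! : ℂ)) ≠ 0 := Nat.cast_ne_zero.2 (Nat.factorial_ne_zero j)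
    have hmf : ((m ! : ℂ)) ≠ 0 := Nat.cast_ne_zero.2 (Nat.factorial_ne_zero m)
    have hm1 : ((m : ℂ) + 1) ≠ 0 := Nat.cast_add_one_ne_zero m
    push_cast
    field_simp
  · have hj2 : 2 * j = n + 1 := by omega
    have g1 : n + 1 - 2 * j = 0 := by omega
    rw [if_neg h, g1]
    norm_num

lemma E_hasDerivAt (x : ℝ) (z : ℂ) :
    HasDerivAt (fun z : ℂ => Complex.exp (-(x : ℂ) * z - z ^ 2 / 4))
      (-((x : ℂ) + z / 2) * Complex.exp (-(x : ℂ) * z - z ^ 2 / 4)) z := by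
  have h1 : HasDerivAt (fun z : ℂ => -(x : ℂ) * z - z ^ 2 / 4)
      (-(x : ℂ) - z / 2) z := by
    have ha : HasDerivAt (fun z : ℂ => -(x : ℂ) * z) (-(x : ℂ)) z := by
      simpa using (hasDerivAt_id z).const_mul (-(x : ℂ))
    have hb : HasDerivAt (fun z : ℂ => z ^ 2 / 4) (z / 2) z := by
      have := (hasDerivAt_pow 2 z).div_const (4 : ℂ)
      refine this.congr_deriv ?_
      ring
    exact ha.sub hb
  have := h1.cexp
  refine this.congr_deriv ?_
  ring

lemma E_iter (x : ℝ) (n : ℕ) :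
    iteratedDeriv n (fun z : ℂ => Complex.exp (-(x : ℂ) * z - z ^ 2 / 4))
      = fun z : ℂ => (n ! : ℂ) * ((-2 : ℂ)⁻¹) ^ n * hS n ((x : ℂ) + z / 2)
          * Complex.exp (-(x : ℂ) * z - z ^ 2 / 4) := by
  have step : ∀ n : ℕ, ∀ z : ℂ,
      HasDerivAt (fun z : ℂ => (n ! : ℂ) * ((-2 : ℂ)⁻¹) ^ n * hS n ((x : ℂ) + z / 2)
          * Complex.exp (-(x : ℂ) * z - z ^ 2 / 4))
        (((n + 1)! : ℂ) * ((-2 : ℂ)⁻¹) ^ (n + 1) * hS (n + 1) ((x : ℂ) + z / 2)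
          * Complex.exp (-(x : ℂ) * z - z ^ 2 / 4)) z := by
    intro n z
    have hinner : HasDerivAt (fun z : ℂ => (x : ℂ) + z / 2) (2⁻¹) z := by
      simpa using ((hasDerivAt_id z).div_const (2 : ℂ)).const_add (x : ℂ)
    match n with
    | 0 =>
      have hfun : (fun z : ℂ => ((0 : ℕ)! : ℂ) * ((-2 : ℂ)⁻¹) ^ 0 * hS 0 ((x : ℂ) + z / 2)
          * Complex.exp (-(x : ℂ) * z - z ^ 2 / 4))
          = fun z : ℂ => Complex.exp (-(x : ℂ) * z - z ^ 2 / 4) := by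
        funext z; rw [hS_zero]; norm_num
      rw [hfun]
      refine (E_hasDerivAt x z).congr_deriv ?_
      rw [hS_one, Nat.factorial_one]
      push_cast
      ring
    | m + 1 =>
      have h1 : HasDerivAt (fun z : ℂ => hS (m + 1) ((x : ℂ) + z / 2))
          (2 * hS m ((x : ℂ) + z / 2) * 2⁻¹) z :=
        by have := (hS_deriv m ((x : ℂ) + z / 2)).comp z hinner; exact this
      have h2 := (h1.const_mul (((m + 1)! : ℂ) * ((-2 : ℂ)⁻¹) ^ (m + 1))).mul (E_hasDerivAt x z)
      refine h2.congr_deriv ?_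
      have hrec := hS_rec m ((x : ℂ) + z / 2)
      simp only [show m + 2 = m + 1 + 1 from rfl] at hrec
      have hfac : (((m + 1 + 1)! : ℕ) : ℂ) = ((m : ℂ) + 2) * ((m + 1)! : ℂ) := by
        rw [Nat.factorial_succ (m + 1)]
        push_cast
        ring
      rw [hfac, pow_succ ((-2 : ℂ)⁻¹) (m + 1)]
      linear_combination ((((m + 1)! : ℂ) * ((-2 : ℂ)⁻¹) ^ (m + 1) * (-2 : ℂ)⁻¹
        * Complex.exp (-(x : ℂ) * z - z ^ 2 / 4))
        - (((m + 1)! : ℂ) * ((-2 : ℂ)⁻¹) ^ m * Complex.exp (-(x : ℂ) * z - z ^ 2 / 4) / 2)) * hrec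
  induction n with
  | zero => funext z; rw [iteratedDeriv_zero, hS_zero]; norm_num
  | succ m ih =>
    rw [iteratedDeriv_succ, ih]
    funext z
    exact (step m z).deriv

lemma E_diff (x : ℝ) : Differentiable ℂ (fun z : ℂ => Complex.exp (-(x : ℂ) * z - z ^ 2 / 4)) := by
  apply Differentiable.cexp
  fun_prop

lemma int_pow (x : ℝ) {R : ℝ} (hR : 0 < R) (k : ℕ) :
    (∮ z in C(0, R), Complex.exp (-(x : ℂ) * z - z ^ 2 / 4) * (z⁻¹) ^ (k + 1))
      = (2 * (π : ℂ) * Complex.I) * (((-2 : ℂ)⁻¹) ^ k * hS k (x : ℂ)) := by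
  lift R to NNReal using hR.le with R' hR'
  have hRpos : 0 < R' := by exact_mod_cast hR
  have hE := E_diff x
  have hps := hE.differentiableOn.hasFPowerSeriesOnBall (c := (0 : ℂ)) (R := R') hRpos
  have h1 := hps.factorial_smul (1 : ℂ) k
  rw [cauchyPowerSeries_apply] at h1
  rw [← iteratedDeriv_eq_iteratedFDeriv, E_iter x k] at h1
  have hint : (∮ z in C(0, (R' : ℝ)), (1 / (z - 0)) ^ k • (z - 0)⁻¹
        • Complex.exp (-(x : ℂ) * z - z ^ 2 / 4))
      = ∮ z in C(0, (R' : ℝ)), Complex.exp (-(x : ℂ) * z - z ^ 2 / 4) * (z⁻¹) ^ (k + 1) := by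
    refine circleIntegral.integral_congr hR.le fun z _ => ?_
    simp only [smul_eq_mul, sub_zero, one_div, pow_succ]
    ring
  rw [hint] at h1
  set I0 := ∮ z in C(0, (R' : ℝ)), Complex.exp (-(x : ℂ) * z - z ^ 2 / 4) * (z⁻¹) ^ (k + 1)
    with hI0
  simp only [nsmul_eq_mul, smul_eq_mul] at h1
  have hk : (k ! : ℂ) ≠ 0 := Nat.cast_ne_zero.2 (Nat.factorial_ne_zero k)
  have h2pi : (2 * (π : ℂ) * Complex.I) ≠ 0 := Complex.two_pi_I_ne_zero
  have hEz : Complex.exp (-(x : ℂ) * 0 - 0 ^ 2 / 4) = 1 := by norm_num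
  rw [hEz, show ((x : ℂ) + 0 / 2) = (x : ℂ) by ring] at h1
  field_simp at h1
  have h2 : (k ! : ℂ) * (I0 * (-2 : ℂ) ^ k) = (k ! : ℂ) * (hS k (x : ℂ) * (2 * (π : ℂ) * Complex.I)) := by
    have h5 : ((-(1 / 2) : ℂ)) ^ k * (-2 : ℂ) ^ k = 1 := by rw [← mul_pow]; norm_num
    linear_combination ((k ! : ℂ) * (-2 : ℂ) ^ k) * h1
      + ((k ! : ℂ) * (2 * (π : ℂ) * Complex.I) * hS k (x : ℂ)) * h5
  have h3 := mul_left_cancel₀ hk h2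
  have h4 : ((-2 : ℂ)⁻¹) ^ k * (-2 : ℂ) ^ k = 1 := by rw [← mul_pow]; norm_num
  linear_combination ((-2 : ℂ)⁻¹) ^ k * h3 - I0 * h4


lemma int_shift (x c : ℝ) {R : ℝ} (hc : 0 < c) (hR : 2 * c < R) :
    (∮ z in C(0, R), Complex.exp (-(x : ℂ) * z - z ^ 2 / 4) * (z + 2 * (c : ℂ))⁻¹)
      = (2 * (π : ℂ) * Complex.I) * Complex.exp (2 * (c : ℂ) * (x : ℂ) - (c : ℂ) ^ 2) := by
  have hR0 : (0 : ℝ) < R := lt_trans (by positivity) hR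
  have hE := E_diff x
  have hw : (-(2 * (c : ℂ))) ∈ Metric.ball (0 : ℂ) R := by
    rw [mem_ball_zero_iff, norm_neg,
      show (2 * (c : ℂ)) = ((2 * c : ℝ) : ℂ) by push_cast; ring, Complex.norm_real]
    rw [Real.norm_eq_abs, abs_of_pos (by positivity)]
    exact hR
  have key := Complex.two_pi_I_inv_smul_circleIntegral_sub_inv_smul_of_differentiable_on_off_countable
    (Set.countable_empty) hw (hE.continuous.continuousOn)
    (fun z _ => hE.differentiableAt)
  have hint : (∮ z in C(0, R), (z - -(2 * (c : ℂ)))⁻¹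
        • Complex.exp (-(x : ℂ) * z - z ^ 2 / 4))
      = ∮ z in C(0, R), Complex.exp (-(x : ℂ) * z - z ^ 2 / 4) * (z + 2 * (c : ℂ))⁻¹ := by
    refine circleIntegral.integral_congr hR0.le fun z _ => ?_
    rw [sub_neg_eq_add, smul_eq_mul, mul_comm]
  rw [hint] at key
  have hval : Complex.exp (-(x : ℂ) * (-(2 * (c : ℂ))) - (-(2 * (c : ℂ))) ^ 2 / 4)
      = Complex.exp (2 * (c : ℂ) * (x : ℂ) - (c : ℂ) ^ 2) := by
    congr 1
    ring
  rw [hval] at key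
  rw [← key, smul_eq_mul, ← mul_assoc, mul_inv_cancel₀ Complex.two_pi_I_ne_zero, one_mul]

lemma circleIntegral_fun_add {f g : ℂ → ℂ} {c : ℂ} {R : ℝ} (hf : CircleIntegrable f c R)
    (hg : CircleIntegrable g c R) :
    (∮ z in C(c, R), (f z + g z)) = (∮ z in C(c, R), f z) + ∮ z in C(c, R), g z := by
  simp only [circleIntegral]
  rw [← intervalIntegral.integral_add hf.out hg.out]
  simp [smul_add, mul_add]

lemma circleIntegrable_finsum {ι : Type*} (s : Finset ι) (f : ι → ℂ → ℂ) {c : ℂ} {R : ℝ}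
    (h : ∀ i ∈ s, CircleIntegrable (f i) c R) :
    CircleIntegrable (fun z => ∑ i ∈ s, f i z) c R := by
  classical
  induction s using Finset.induction_on with
  | empty => simpa using circleIntegrable_const (0 : ℂ) c R
  | @insert a s hni ih =>
    simp only [Finset.sum_insert hni]
    exact (h a (Finset.mem_insert_self a s)).add
      (ih fun i hi => h i (Finset.mem_insert_of_mem hi))

lemma circleIntegral_finsum {ι : Type*} (s : Finset ι) (f : ι → ℂ → ℂ) {c : ℂ} {R : ℝ}
    (h : ∀ i ∈ s, CircleIntegrable (f i) c R) :
    (∮ z in C(c, R), ∑ i ∈ s, f i z) = ∑ i ∈ s, ∮ z in C(c, R), f i z := by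
  classical
  induction s using Finset.induction_on with
  | empty => simp [circleIntegral]
  | @insert a s hni ih =>
    simp only [Finset.sum_insert hni]
    rw [← ih fun i hi => h i (Finset.mem_insert_of_mem hi)]
    rw [← circleIntegral_fun_add (h a (Finset.mem_insert_self a s))
      (circleIntegrable_finsum s f fun i hi => h i (Finset.mem_insert_of_mem hi))]

lemma PF (w : ℂ) (hw : w ≠ 0) : ∀ q : ℕ, 1 ≤ q → ∀ z : ℂ, z ≠ 0 → z + w ≠ 0 →
    (z ^ q * (z + w))⁻¹ =
      (∑ k ∈ Finset.range q, (-1 : ℂ) ^ (q - 1 - k) * (w⁻¹) ^ (q - k) * (z⁻¹) ^ (k + 1))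
        + (-1 : ℂ) ^ q * (w⁻¹) ^ q * (z + w)⁻¹ := by
  intro q hq
  induction q, hq using Nat.le_induction with
  | base =>
    intro z hz hzw
    rw [Finset.sum_range_one]
    norm_num
    field_simp
    ring
  | succ q hq ih =>
    intro z hz hzw
    rw [show z ^ (q + 1) * (z + w) = z * (z ^ q * (z + w)) by ring, mul_inv, ih z hz hzw,
      mul_add, Finset.mul_sum,
      Finset.sum_range_succ' (fun k => (-1 : ℂ) ^ (q + 1 - 1 - k) * (w⁻¹) ^ (q + 1 - k) * (z⁻¹) ^ (k + 1)),
      add_assoc]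
    congr 1
    · refine Finset.sum_congr rfl fun k hk => ?_
      rw [show q + 1 - 1 - (k + 1) = q - 1 - k by omega,
        show q + 1 - (k + 1) = q - k by omega]
      rw [pow_succ (z⁻¹) (k + 1)]
      ring
    · rw [show q + 1 - 1 - 0 = q by omega, show q + 1 - 0 = q + 1 by omega,
        pow_succ ((-1 : ℂ)) q, pow_succ (w⁻¹) q]
      have hsplit : z⁻¹ * (z + w)⁻¹ = w⁻¹ * z⁻¹ - w⁻¹ * (z + w)⁻¹ := by
        field_simp
        ring
      linear_combination ((-1 : ℂ) ^ q * (w⁻¹) ^ q) * hsplit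


lemma hermiteH_cast (n : ℕ) (x : ℝ) : ((hermiteH n x : ℝ) : ℂ) = (n ! : ℂ) * hS n (x : ℂ) := by
  rw [hermiteH, hS, Complex.ofReal_mul, Complex.ofReal_sum]
  push_cast
  ring

theorem stmt_14 (q : ℕ) (hq : 1 ≤ q) (c x : ℝ) (hc : 0 < c)
    (R : ℝ) (hR : 2 * c < R) :
    (1 / (2 * π * Complex.I)) *
        (∮ z in C(0, R), Complex.exp (-(x : ℂ) * z - z ^ 2 / 4) / (z ^ q * (z + 2 * c)))
      = (((-1 : ℝ) ^ q *
          (Real.exp (2 * c * x - c ^ 2) / (2 * c) ^ q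
            - ∑ p ∈ Finset.range q,
                (1 / (2 * c) ^ (p + 1)) * hermiteH (q - 1 - p) x
                  / (2 ^ (q - 1 - p) * ((q - 1 - p)! : ℝ)) ) : ℝ) : ℂ) := by
  have hR0 : (0 : ℝ) < R := lt_trans (by positivity) hR
  have hcC : ((c : ℂ)) ≠ 0 := Complex.ofReal_ne_zero.2 hc.ne'
  have hw : (2 * (c : ℂ)) ≠ 0 := mul_ne_zero two_ne_zero hcC
  have hE := E_diff x
  have hnorm2c : ‖(2 * (c : ℂ))‖ = 2 * c := by
    rw [show (2 * (c : ℂ)) = ((2 * c : ℝ) : ℂ) by push_cast; ring, Complex.norm_real,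
      Real.norm_eq_abs, abs_of_pos (by positivity)]
  have hzsph : ∀ z ∈ Metric.sphere (0 : ℂ) R, z ≠ 0 ∧ z + 2 * (c : ℂ) ≠ 0 := by
    intro z hz
    rw [mem_sphere_zero_iff_norm] at hz
    constructor
    · intro h0; rw [h0, norm_zero] at hz; exact hR0.ne hz
    · intro h0
      have hzeq : z = -(2 * (c : ℂ)) := by linear_combination h0
      rw [hzeq, norm_neg, hnorm2c] at hz
      exact (lt_irrefl R) (hz ▸ hR)
  -- Step 1: partial fractions inside the integral
  have key : (∮ z in C(0, R), Complex.exp (-(x : ℂ) * z - z ^ 2 / 4) / (z ^ q * (z + 2 * c)))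
      = ∮ z in C(0, R),
          ((∑ k ∈ Finset.range q, ((-1 : ℂ) ^ (q - 1 - k) * ((2 * (c : ℂ))⁻¹) ^ (q - k))
              * (Complex.exp (-(x : ℂ) * z - z ^ 2 / 4) * (z⁻¹) ^ (k + 1)))
            + ((-1 : ℂ) ^ q * ((2 * (c : ℂ))⁻¹) ^ q)
              * (Complex.exp (-(x : ℂ) * z - z ^ 2 / 4) * (z + 2 * (c : ℂ))⁻¹)) := by
    refine circleIntegral.integral_congr hR0.le fun z hz => ?_
    obtain ⟨hz0, hzw⟩ := hzsph z hz
    rw [div_eq_mul_inv, PF (2 * (c : ℂ)) hw q hq z hz0 hzw, mul_add, Finset.mul_sum]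
    congr 1
    · exact Finset.sum_congr rfl fun k _ => by ring
    · ring
  rw [key]
  -- Step 2: integrability of the pieces
  have hcontE : ContinuousOn (fun z : ℂ => Complex.exp (-(x : ℂ) * z - z ^ 2 / 4))
      (Metric.sphere (0 : ℂ) R) := hE.continuous.continuousOn
  have hint1 : ∀ k ∈ Finset.range q, CircleIntegrable
      (fun z : ℂ => ((-1 : ℂ) ^ (q - 1 - k) * ((2 * (c : ℂ))⁻¹) ^ (q - k))
        * (Complex.exp (-(x : ℂ) * z - z ^ 2 / 4) * (z⁻¹) ^ (k + 1))) 0 R := by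
    intro k _
    refine ContinuousOn.circleIntegrable hR0.le ?_
    refine (continuousOn_const.mul (hcontE.mul (ContinuousOn.pow ?_ _)))
    exact ContinuousOn.inv₀ continuousOn_id fun z hz => (hzsph z hz).1
  have hint2 : CircleIntegrable
      (fun z : ℂ => ((-1 : ℂ) ^ q * ((2 * (c : ℂ))⁻¹) ^ q)
        * (Complex.exp (-(x : ℂ) * z - z ^ 2 / 4) * (z + 2 * (c : ℂ))⁻¹)) 0 R := by
    refine ContinuousOn.circleIntegrable hR0.le ?_
    refine continuousOn_const.mul (hcontE.mul (ContinuousOn.inv₀ ?_ fun z hz => (hzsph z hz).2))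
    exact (continuous_id.add continuous_const).continuousOn
  rw [circleIntegral_fun_add (circleIntegrable_finsum _ _ hint1) hint2,
    circleIntegral_finsum _ _ hint1]
  simp only [circleIntegral.integral_const_mul]
  rw [Finset.sum_congr rfl fun k _ => by rw [int_pow x hR0 k], int_shift x c hc hR]
  -- Step 3: algebra
  have h2pi : (2 * (π : ℂ) * Complex.I) ≠ 0 := Complex.two_pi_I_ne_zero
  rw [show (∑ k ∈ Finset.range q,
        ((-1 : ℂ) ^ (q - 1 - k) * ((2 * (c : ℂ))⁻¹) ^ (q - k))
          * ((2 * (π : ℂ) * Complex.I) * (((-2 : ℂ)⁻¹) ^ k * hS k (x : ℂ))))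
        + ((-1 : ℂ) ^ q * ((2 * (c : ℂ))⁻¹) ^ q)
          * ((2 * (π : ℂ) * Complex.I) * Complex.exp (2 * (c : ℂ) * (x : ℂ) - (c : ℂ) ^ 2))
      = (2 * (π : ℂ) * Complex.I) *
          ((∑ k ∈ Finset.range q,
            ((-1 : ℂ) ^ (q - 1 - k) * ((2 * (c : ℂ))⁻¹) ^ (q - k)) * (((-2 : ℂ)⁻¹) ^ k * hS k (x : ℂ)))
          + ((-1 : ℂ) ^ q * ((2 * (c : ℂ))⁻¹) ^ q)
            * Complex.exp (2 * (c : ℂ) * (x : ℂ) - (c : ℂ) ^ 2)) by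
    rw [mul_add, Finset.mul_sum]
    congr 1
    · exact Finset.sum_congr rfl fun k _ => by ring
    · ring]
  rw [one_div, inv_mul_cancel_left₀ h2pi]
  -- Step 4: cast the right-hand side
  push_cast [Complex.ofReal_sum, Complex.ofReal_exp]
  simp only [hermiteH_cast]
  -- Step 5: final finite-sum identity
  have hBC : ((-1 : ℂ) ^ q * ((2 * (c : ℂ))⁻¹) ^ q)
      * Complex.exp (2 * (c : ℂ) * (x : ℂ) - (c : ℂ) ^ 2)
      = (-1 : ℂ) ^ q * (Complex.exp (2 * (c : ℂ) * (x : ℂ) - (c : ℂ) ^ 2) / (2 * (c : ℂ)) ^ q) := by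
    rw [inv_pow]
    ring
  have hsum : (∑ k ∈ Finset.range q,
      ((-1 : ℂ) ^ (q - 1 - k) * ((2 * (c : ℂ))⁻¹) ^ (q - k)) * (((-2 : ℂ)⁻¹) ^ k * hS k (x : ℂ)))
      = - ∑ k ∈ Finset.range q, (-1 : ℂ) ^ q *
          ((1 / (2 * (c : ℂ)) ^ ((q - 1 - k) + 1)) * (((q - 1 - (q - 1 - k))! : ℂ)
            * hS (q - 1 - (q - 1 - k)) (x : ℂ))
            / (2 ^ (q - 1 - (q - 1 - k)) * ((q - 1 - (q - 1 - k))! : ℂ))) := by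
    rw [← Finset.sum_neg_distrib]
    refine Finset.sum_congr rfl fun k hk => ?_
    simp only [Finset.mem_range] at hk
    rw [show q - 1 - (q - 1 - k) = k by omega, show (q - 1 - k) + 1 = q - k by omega]
    have hkfac : ((k ! : ℕ) : ℂ) ≠ 0 := Nat.cast_ne_zero.2 (Nat.factorial_ne_zero k)
    have hsgn : (-1 : ℂ) ^ (q - 1 - k) * (-1 : ℂ) ^ k = (-1 : ℂ) ^ (q - 1) := by
      rw [← pow_add, show q - 1 - k + k = q - 1 by omega]
    have hq' : (-1 : ℂ) ^ q = (-1 : ℂ) ^ (q - 1) * (-1) := by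
      rw [← pow_succ, show q - 1 + 1 = q by omega]
    have h2 : ((-2 : ℂ)⁻¹) ^ k = (-1 : ℂ) ^ k / 2 ^ k := by
      rw [← div_pow]; norm_num
    rw [h2, hq', mul_comm ((2 : ℂ) ^ k) ((k ! : ℕ) : ℂ), mul_div_assoc,
      mul_div_mul_left _ _ hkfac,
      show (1 : ℂ) / (2 * (c : ℂ)) ^ (q - k) = ((2 * (c : ℂ))⁻¹) ^ (q - k) by
        rw [one_div, ← inv_pow]]
    linear_combination ((2 * (c : ℂ))⁻¹ ^ (q - k) * hS k (x : ℂ) / 2 ^ k) * hsgn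
  rw [mul_sub, ← Finset.sum_range_reflect (fun p =>
    (1 / (2 * (c : ℂ)) ^ (p + 1)) * (((q - 1 - p)! : ℂ) * hS (q - 1 - p) (x : ℂ))
      / (2 ^ (q - 1 - p) * ((q - 1 - p)! : ℂ))) q, Finset.mul_sum, hsum, hBC]
  ring
end

section
/- Let n ≥ 0 and a ≥ 0 be integers, let x be a real number, and let 0 < ρ < 1. Then the contour integral (1/(2πi)) ∮_{|w+1|=ρ} e^{xw} w^n / (w + 1)^{n+a+1} dw equals (n!/(n+a)!) · e^{−x} · x^a · L_n^a(x). -/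
open Real Nat
open scoped NNReal ENNReal

/-- Generalized Laguerre polynomial
`L_n^a(x) = Σ_{k=0}^n (−1)^k binomial(n+a, n−k) x^k/k!`. -/
noncomputable def laguerreL (n a : ℕ) (x : ℝ) : ℝ :=
  ∑ k ∈ Finset.range (n + 1),
    (-1 : ℝ) ^ k * (Nat.choose (n + a) (n - k) : ℝ) * x ^ k / (k ! : ℝ)

/-- coefficients of `(y-1)^n` -/
noncomputable def lagA (n : ℕ) : ℕ → ℂ := fun j =>
  if j ≤ n then ((n.choose j : ℂ) * (-1) ^ (n - j)) else 0

/-- Taylor coefficients of `e^{xw} w^n` at `w = -1`. -/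
noncomputable def lagC (n : ℕ) (x : ℝ) : ℕ → ℂ := fun k =>
  Complex.exp (-(x : ℂ)) *
    ∑ j ∈ Finset.range (k + 1), lagA n j * ((x : ℂ) ^ (k - j) / ((k - j)! : ℂ))

lemma lagA_vanish (n : ℕ) {j : ℕ} (hj : j ∉ Finset.range (n + 1)) : lagA n j = 0 := by
  rw [Finset.mem_range] at hj
  simp [lagA, show ¬ j ≤ n by omega]

lemma hasSum_lag (n : ℕ) (x : ℝ) (y : ℂ) :
    HasSum (fun k => lagC n x k * y ^ k)
      (Complex.exp ((x : ℂ) * (-1 + y)) * (-1 + y) ^ n) := by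
  set F : ℕ → ℂ := fun j => lagA n j * y ^ j with hF
  set G : ℕ → ℂ := fun m => ((x : ℂ) * y) ^ m / (m ! : ℂ) with hG
  have hFvanish : ∀ j ∉ Finset.range (n + 1), F j = 0 := fun j hj => by
    simp [hF, lagA_vanish n hj]
  have hFs : Summable fun j => ‖F j‖ :=
    summable_of_ne_finset_zero (s := Finset.range (n + 1))
      (fun j hj => by simp [hFvanish j hj])
  have hGs : Summable fun m => ‖G m‖ := by
    have : (fun m => ‖G m‖) = fun m => ‖(x : ℂ) * y‖ ^ m / (m ! : ℝ) := by
      funext m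
      simp [hG, norm_div, norm_pow]
    rw [this]
    exact Real.summable_pow_div_factorial _
  have H := hasSum_sum_range_mul_of_summable_norm hFs hGs
  have hFt : (∑' j, F j) = (y + (-1)) ^ n := by
    rw [(hasSum_sum_of_ne_finset_zero hFvanish).tsum_eq, add_pow]
    refine Finset.sum_congr rfl fun j hj => ?_
    rw [Finset.mem_range] at hj
    simp only [hF, lagA, if_pos (show j ≤ n by omega)]
    ring
  have hGt : (∑' m, G m) = Complex.exp ((x : ℂ) * y) := by
    rw [(NormedSpace.expSeries_div_hasSum_exp ((x : ℂ) * y)).tsum_eq, Complex.exp_eq_exp_ℂ]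
  rw [hFt, hGt] at H
  have H2 := H.mul_left (Complex.exp (-(x : ℂ)))
  have heq : (fun k => Complex.exp (-(x : ℂ)) *
      ∑ j ∈ Finset.range (k + 1), F j * G (k - j)) = fun k => lagC n x k * y ^ k := by
    funext k
    rw [lagC, mul_assoc, Finset.sum_mul]
    congr 1
    refine Finset.sum_congr rfl fun j hj => ?_
    rw [Finset.mem_range] at hj
    have hjk : j ≤ k := by omega
    have hy : y ^ k = y ^ j * y ^ (k - j) := by
      rw [← pow_add, Nat.add_sub_cancel' hjk]
    simp only [hF, hG]
    rw [hy, mul_pow]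
    ring
  rw [heq] at H2
  have hval : Complex.exp (-(x : ℂ)) * ((y + (-1)) ^ n * Complex.exp ((x : ℂ) * y)) =
      Complex.exp ((x : ℂ) * (-1 + y)) * (-1 + y) ^ n := by
    have he : Complex.exp ((x : ℂ) * (-1 + y)) =
        Complex.exp (-(x : ℂ)) * Complex.exp ((x : ℂ) * y) := by
      rw [← Complex.exp_add]; congr 1; ring
    rw [he, show (-1 + y : ℂ) = y + (-1) by ring]
    ring
  rwa [hval] at H2

lemma summable_norm_lagC (n : ℕ) (x : ℝ) : Summable fun k => ‖lagC n x k‖ := by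
  set u : ℕ → ℝ := fun j => ‖lagA n j‖ with hu
  set v : ℕ → ℝ := fun m => ‖(x : ℂ)‖ ^ m / (m ! : ℝ) with hv
  have hus : Summable fun j => ‖u j‖ :=
    summable_of_ne_finset_zero (s := Finset.range (n + 1))
      (fun j hj => by simp [hu, lagA_vanish n hj])
  have hvs : Summable fun m => ‖v m‖ := by
    have : (fun m => ‖v m‖) = v := by
      funext m
      simp only [hv, Real.norm_eq_abs]
      rw [abs_of_nonneg (by positivity)]
    rw [this]
    exact Real.summable_pow_div_factorial _
  have S := summable_norm_sum_mul_range_of_summable_norm hus hvs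
  have S2 := S.mul_left ‖Complex.exp (-(x : ℂ))‖
  refine Summable.of_nonneg_of_le (fun k => norm_nonneg _) (fun k => ?_) S2
  rw [lagC, norm_mul]
  gcongr
  calc ‖∑ j ∈ Finset.range (k + 1), lagA n j * ((x : ℂ) ^ (k - j) / ((k - j)! : ℂ))‖
      ≤ ∑ j ∈ Finset.range (k + 1), ‖lagA n j * ((x : ℂ) ^ (k - j) / ((k - j)! : ℂ))‖ :=
        norm_sum_le _ _
    _ = ∑ j ∈ Finset.range (k + 1), u j * v (k - j) := by
        refine Finset.sum_congr rfl fun j _ => ?_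
        simp [hu, hv, norm_mul, norm_div, norm_pow]
    _ ≤ ‖∑ j ∈ Finset.range (k + 1), u j * v (k - j)‖ := le_abs_self _

lemma hasFPowerSeries_lag (n : ℕ) (x : ℝ) :
    HasFPowerSeriesOnBall (fun w : ℂ => Complex.exp ((x : ℂ) * w) * w ^ n)
      (FormalMultilinearSeries.ofScalars ℂ (lagC n x)) (-1) 1 := by
  refine ⟨?_, one_pos, fun {y} _ => ?_⟩
  · have h : Summable fun k => ‖FormalMultilinearSeries.ofScalars ℂ (lagC n x) k‖ * (1 : ℝ) ^ k := by
      simp only [FormalMultilinearSeries.ofScalars_norm, one_pow, mul_one]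
      exact summable_norm_lagC n x
    have := FormalMultilinearSeries.le_radius_of_summable_norm _ (r := 1) h
    simpa using this
  · simp only [FormalMultilinearSeries.ofScalars_apply_eq, smul_eq_mul]
    exact hasSum_lag n x y

lemma lagC_eval (n a : ℕ) (x : ℝ) :
    lagC n x (n + a) =
      ((((n ! : ℝ) / ((n + a)! : ℝ)) * Real.exp (-x) * x ^ a * laguerreL n a x : ℝ) : ℂ) := by
  rw [lagC]
  have hsub : Finset.range (n + 1) ⊆ Finset.range (n + a + 1) :=
    Finset.range_subset_range.mpr (by omega)
  rw [← Finset.sum_subset hsub (fun j _ hj => by simp [lagA_vanish n hj])]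
  rw [← Finset.sum_range_reflect]
  rw [laguerreL]
  push_cast [Complex.ofReal_exp, Finset.mul_sum]
  refine Finset.sum_congr rfl fun k hk => ?_
  rw [Finset.mem_range] at hk
  have hkn : k ≤ n := by omega
  have h1 : (n + 1 - 1 - k) = n - k := by omega
  have h2 : n - (n - k) = k := by omega
  have h3 : n + a - (n - k) = a + k := by omega
  simp only [h1, lagA]
  rw [if_pos (Nat.sub_le n k), h2, h3]
  have c1 : ((n.choose (n - k) : ℂ)) * ((n - k)! : ℂ) * ((k)! : ℂ) = (n ! : ℂ) := by
    have := Nat.choose_mul_factorial_mul_factorial (show n - k ≤ n from Nat.sub_le n k)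
    rw [h2] at this
    exact_mod_cast congrArg (Nat.cast : ℕ → ℂ) this
  have c2 : (((n + a).choose (n - k) : ℂ)) * ((n - k)! : ℂ) * ((a + k)! : ℂ) = ((n + a)! : ℂ) := by
    have := Nat.choose_mul_factorial_mul_factorial (show n - k ≤ n + a by omega)
    rw [h3] at this
    exact_mod_cast congrArg (Nat.cast : ℕ → ℂ) this
  have hf1 : ((n - k)! : ℂ) ≠ 0 := Nat.cast_ne_zero.mpr (Nat.factorial_ne_zero _)
  have hf2 : ((k)! : ℂ) ≠ 0 := Nat.cast_ne_zero.mpr (Nat.factorial_ne_zero _)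
  have hf3 : ((a + k)! : ℂ) ≠ 0 := Nat.cast_ne_zero.mpr (Nat.factorial_ne_zero _)
  have hf4 : (((n + a))! : ℂ) ≠ 0 := Nat.cast_ne_zero.mpr (Nat.factorial_ne_zero _)
  have e1 : ((n.choose (n - k) : ℂ)) = (n ! : ℂ) / (((n - k)! : ℂ) * ((k)! : ℂ)) := by
    rw [eq_div_iff (mul_ne_zero hf1 hf2)]
    linear_combination c1
  have e2 : (((n + a).choose (n - k) : ℂ)) = ((n + a)! : ℂ) / (((n - k)! : ℂ) * ((a + k)! : ℂ)) := by
    rw [eq_div_iff (mul_ne_zero hf1 hf3)]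
    linear_combination c2
  rw [e1, e2, pow_add]
  field_simp

theorem stmt_19 (n a : ℕ) (x ρ : ℝ) (hρ0 : 0 < ρ) (hρ1 : ρ < 1) :
    (1 / (2 * π * Complex.I)) *
        (∮ w in C(-1, ρ), Complex.exp ((x : ℂ) * w) * w ^ n / (w + 1) ^ (n + a + 1))
      = ((((n ! : ℝ) / ((n + a)! : ℝ)) * Real.exp (-x) * x ^ a * laguerreL n a x : ℝ) : ℂ) := by
  set f : ℂ → ℂ := fun w => Complex.exp ((x : ℂ) * w) * w ^ n with hfdef
  have hf : Differentiable ℂ f := by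
    apply Differentiable.mul
    · exact (differentiable_const _).mul differentiable_id |>.cexp
    · exact differentiable_pow n
  have hρ : 0 < ρ.toNNReal := Real.toNNReal_pos.mpr hρ0
  have hp := (hf.differentiableOn (s := Metric.closedBall (-1) ρ.toNNReal)).hasFPowerSeriesOnBall hρ
  have hcoe : ((ρ.toNNReal : ℝ)) = ρ := Real.coe_toNNReal _ hρ0.le
  rw [hcoe] at hp
  have hq := hasFPowerSeries_lag n x
  have heq : cauchyPowerSeries f (-1) ρ = FormalMultilinearSeries.ofScalars ℂ (lagC n x) :=
    hp.hasFPowerSeriesAt.eq_formalMultilinearSeries hq.hasFPowerSeriesAt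
  have hap := cauchyPowerSeries_apply f (-1) ρ (n + a) 1
  have hfun : (fun z : ℂ => ((1 : ℂ) / (z - (-1))) ^ (n + a) • (z - (-1))⁻¹ • f z) =
      fun w => Complex.exp ((x : ℂ) * w) * w ^ n / (w + 1) ^ (n + a + 1) := by
    funext z
    simp only [smul_eq_mul, sub_neg_eq_add, hfdef]
    by_cases hz : z + 1 = 0
    · rw [hz]
      simp
    · rw [one_div, inv_pow, pow_succ, div_eq_mul_inv, mul_inv]
      ring
  rw [hfun] at hap
  have hval : (cauchyPowerSeries f (-1) ρ (n + a) fun _ => (1 : ℂ)) = lagC n x (n + a) := by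
    rw [heq, FormalMultilinearSeries.ofScalars_apply_eq]
    simp
  calc (1 / (2 * (π : ℂ) * Complex.I)) *
        (∮ w in C(-1, ρ), Complex.exp ((x : ℂ) * w) * w ^ n / (w + 1) ^ (n + a + 1))
      = (2 * (π : ℂ) * Complex.I)⁻¹ •
        (∮ w in C(-1, ρ), Complex.exp ((x : ℂ) * w) * w ^ n / (w + 1) ^ (n + a + 1)) := by
        rw [smul_eq_mul, one_div]
    _ = (cauchyPowerSeries f (-1) ρ (n + a) fun _ => (1 : ℂ)) := hap.symm
    _ = lagC n x (n + a) := hval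
    _ = _ := lagC_eval n a x
end
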